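/- arXiv:1107.4860 — 10 statements merged into one kernel-verified Lean document; each statement's English description precedes it below -/
import Mathlib

section
/- Let R be a commutative ring and f ∈ R[[X]]. Suppose f₀ = ab with (a,b) = R, and choose r, s ∈ R with ra + sb = 1. Define g ∈ R[[X]] by g₀ = 0 and gₙ = fₙ − rs·∑_{i=1}^{n−1} g_i g_{n−i} for n ≥ 1. Then f = (a + s g)(b + r g), and g is the unique power series with constant term 0 satisfying this equation; moreover (a + sg, b + rg) = R[[X]]. -/
open PowerSeries Finset

private lemma key_expand {R : Type*} [CommRing R] (a b r s : R) (hrs : r * a + s * b = 1)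
    (G : PowerSeries R) :
    (PowerSeries.C a + PowerSeries.C s * G) * (PowerSeries.C b + PowerSeries.C r * G)
      = PowerSeries.C (a * b) + G + PowerSeries.C (r * s) * G ^ 2 := by
  have h1 : (PowerSeries.C) (r * a + s * b) = 1 := by rw [hrs, map_one]
  have : (PowerSeries.C a + PowerSeries.C s * G) *
      (PowerSeries.C b + PowerSeries.C r * G)
      = PowerSeries.C (a * b) + PowerSeries.C (r * a + s * b) * G
        + PowerSeries.C (r * s) * G ^ 2 := by
    simp only [map_add, map_mul]; ring
  rw [this, h1, one_mul]

private lemma sum_Ioo_eq {R : Type*} [CommRing R] (h : ℕ → R) (h0 : h 0 = 0)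
    (n : ℕ) (hn : 1 ≤ n) :
    ∑ i ∈ Finset.range (n + 1), h i * h (n - i) = ∑ i ∈ Finset.Ioo 0 n, h i * h (n - i) := by
  have hset : Finset.range (n + 1) = insert 0 (insert n (Finset.Ioo 0 n)) := by
    ext x; simp [Finset.mem_Ioo, Finset.mem_range]; omega
  rw [hset, Finset.sum_insert (by simp [Finset.mem_Ioo]; omega),
    Finset.sum_insert (by simp [Finset.mem_Ioo])]
  simp [h0]

private lemma coeff_expand {R : Type*} [CommRing R] (c : R) (rs : R) (G : PowerSeries R)
    (n : ℕ) :
    PowerSeries.coeff n (PowerSeries.C c + G + PowerSeries.C rs * G ^ 2)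
      = (if n = 0 then c else 0) + PowerSeries.coeff n G
        + rs * ∑ i ∈ Finset.range (n + 1),
            PowerSeries.coeff i G * PowerSeries.coeff (n - i) G := by
  rw [map_add, map_add, PowerSeries.coeff_C, PowerSeries.coeff_C_mul, sq,
    PowerSeries.coeff_mul, Finset.Nat.sum_antidiagonal_eq_sum_range_succ_mk]

theorem stmt_1 {R : Type*} [CommRing R] (f : PowerSeries R) (a b r s : R)
    (hab : PowerSeries.constantCoeff f = a * b) (hrs : r * a + s * b = 1)
    (g : ℕ → R) (hg0 : g 0 = 0)
    (hgn : ∀ n : ℕ, 1 ≤ n →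
      g n = PowerSeries.coeff n f - r * s * ∑ i ∈ Finset.Ioo 0 n, g i * g (n - i)) :
    f = (PowerSeries.C a + PowerSeries.C s * PowerSeries.mk g) *
        (PowerSeries.C b + PowerSeries.C r * PowerSeries.mk g) ∧
    (∀ g' : PowerSeries R, PowerSeries.constantCoeff g' = 0 →
      f = (PowerSeries.C a + PowerSeries.C s * g') *
          (PowerSeries.C b + PowerSeries.C r * g') → g' = PowerSeries.mk g) ∧
    Ideal.span {PowerSeries.C a + PowerSeries.C s * PowerSeries.mk g,
      PowerSeries.C b + PowerSeries.C r * PowerSeries.mk g} = ⊤ := by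
  have hmain : f = (PowerSeries.C a + PowerSeries.C s * PowerSeries.mk g) *
      (PowerSeries.C b + PowerSeries.C r * PowerSeries.mk g) := by
    rw [key_expand a b r s hrs]
    ext n
    rw [_root_.coeff_expand]
    rcases Nat.eq_zero_or_pos n with hn | hn
    · subst hn
      simp [hg0, ← hab, PowerSeries.coeff_zero_eq_constantCoeff]
    · simp only [PowerSeries.coeff_mk]
      rw [sum_Ioo_eq g hg0 n hn, if_neg (by omega), hgn n hn]
      ring
  refine ⟨hmain, ?_, ?_⟩
  · intro g' hg'0 heq
    have hg'c : ∀ n, PowerSeries.coeff n g' = g n := by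
      intro n
      induction n using Nat.strong_induction_on with
      | _ n ih =>
        rcases Nat.eq_zero_or_pos n with hn | hn
        · subst hn
          rw [PowerSeries.coeff_zero_eq_constantCoeff, hg'0, hg0]
        · have hcoeff := congrArg (PowerSeries.coeff n) heq
          rw [key_expand a b r s hrs, _root_.coeff_expand, if_neg (by omega),
            sum_Ioo_eq (fun i => PowerSeries.coeff i g')
              (by simpa using hg'0) n hn] at hcoeff
          have hsum : ∑ i ∈ Finset.Ioo 0 n,
              PowerSeries.coeff i g' * PowerSeries.coeff (n - i) g'
              = ∑ i ∈ Finset.Ioo 0 n, g i * g (n - i) := by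
            refine Finset.sum_congr rfl fun i hi => ?_
            simp only [Finset.mem_Ioo] at hi
            rw [ih i hi.2, ih (n - i) (by omega)]
          rw [hsum] at hcoeff
          rw [hgn n hn]
          linear_combination -hcoeff
    ext n
    rw [hg'c n, PowerSeries.coeff_mk]
  · set A := PowerSeries.C a + PowerSeries.C s * PowerSeries.mk g with hA
    set B := PowerSeries.C b + PowerSeries.C r * PowerSeries.mk g with hB
    have hAmem : A ∈ Ideal.span {A, B} := Ideal.subset_span (by simp)
    have hBmem : B ∈ Ideal.span {A, B} := Ideal.subset_span (by simp)
    have humem : PowerSeries.C r * A + PowerSeries.C s * B ∈ Ideal.span {A, B} :=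
      Ideal.add_mem _ (Ideal.mul_mem_left _ _ hAmem) (Ideal.mul_mem_left _ _ hBmem)
    have hunit : IsUnit (PowerSeries.C r * A + PowerSeries.C s * B) := by
      rw [PowerSeries.isUnit_iff_constantCoeff]
      have : PowerSeries.constantCoeff (PowerSeries.C r * A + PowerSeries.C s * B)
          = 1 := by
        simp [hA, hB, PowerSeries.constantCoeff_mk, hg0]
        linear_combination hrs
      rw [this]; exact isUnit_one
    exact Ideal.eq_top_of_isUnit_mem _ humem hunit
end

section
/- Let R be an integral domain and f ∈ R[[X]] with unit coefficient f₁ (i.e., (f₁) = R). Then f is irreducible in R[[X]] if and only if (f₀) ≠ R and for any a, b ∈ R with f₀ = ab and (a,b) = R, one has (a) = R or (b) = R. -/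
open PowerSeries Finset

noncomputable def auxSeq {R : Type*} [CommRing R] (f : PowerSeries R) (a b u v : R) :
    ℕ → R × R
  | 0 => (a, b)
  | (n + 1) =>
    let c := PowerSeries.coeff (n + 1) f -
      ∑ i ∈ (Finset.range n).attach,
        (auxSeq f a b u v (i.1 + 1)).1 * (auxSeq f a b u v (n - i.1)).2
    (v * c, u * c)
  decreasing_by
  · exact Nat.succ_lt_succ (Finset.mem_range.mp i.2)
  · exact Nat.lt_succ_of_le (Nat.sub_le n i.1)

lemma auxSeq_mul {R : Type*} [CommRing R] (f : PowerSeries R) (a b u v : R)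
    (hab : PowerSeries.constantCoeff f = a * b) (huv : u * a + v * b = 1) :
    (PowerSeries.mk fun n => (auxSeq f a b u v n).1) *
      (PowerSeries.mk fun n => (auxSeq f a b u v n).2) = f := by
  ext n
  rw [PowerSeries.coeff_mul, Finset.Nat.sum_antidiagonal_eq_sum_range_succ_mk]
  simp only [PowerSeries.coeff_mk]
  cases n with
  | zero =>
    simpa [auxSeq] using hab.symm
  | succ m =>
    rw [Finset.sum_range_succ, Finset.sum_range_succ']
    have hS : ∑ i ∈ (Finset.range m).attach,
        (auxSeq f a b u v (i.1 + 1)).1 * (auxSeq f a b u v (m - i.1)).2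
        = ∑ k ∈ Finset.range m,
            (auxSeq f a b u v (k + 1)).1 * (auxSeq f a b u v (m - k)).2 :=
      Finset.sum_attach (Finset.range m)
        (fun k => (auxSeq f a b u v (k + 1)).1 * (auxSeq f a b u v (m - k)).2)
    have hG : (auxSeq f a b u v (m + 1)).1 = v * (PowerSeries.coeff (m + 1) f -
        ∑ k ∈ Finset.range m,
          (auxSeq f a b u v (k + 1)).1 * (auxSeq f a b u v (m - k)).2) := by
      rw [auxSeq, hS]
    have hH : (auxSeq f a b u v (m + 1)).2 = u * (PowerSeries.coeff (m + 1) f -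
        ∑ k ∈ Finset.range m,
          (auxSeq f a b u v (k + 1)).1 * (auxSeq f a b u v (m - k)).2) := by
      rw [auxSeq, hS]
    have h0a : (auxSeq f a b u v 0).1 = a := by rw [auxSeq]
    have h0b : (auxSeq f a b u v 0).2 = b := by rw [auxSeq]
    have hidx : ∀ k ∈ Finset.range m,
        (auxSeq f a b u v (k + 1)).1 * (auxSeq f a b u v (m + 1 - (k + 1))).2
        = (auxSeq f a b u v (k + 1)).1 * (auxSeq f a b u v (m - k)).2 := by
      intro k _
      have : m + 1 - (k + 1) = m - k := by omega
      rw [this]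
    rw [Finset.sum_congr rfl hidx]
    simp only [Nat.sub_self, Nat.sub_zero]
    rw [hG, hH, h0a, h0b]
    set S := ∑ k ∈ Finset.range m,
      (auxSeq f a b u v (k + 1)).1 * (auxSeq f a b u v (m - k)).2
    linear_combination (PowerSeries.coeff (m + 1) f - S) * huv

theorem stmt_2 {R : Type*} [CommRing R] [IsDomain R] (f : PowerSeries R)
    (hf1 : Ideal.span {PowerSeries.coeff 1 f} = ⊤) :
    Irreducible f ↔
      (Ideal.span {PowerSeries.constantCoeff f} ≠ ⊤ ∧
        ∀ a b : R, PowerSeries.constantCoeff f = a * b → Ideal.span {a, b} = ⊤ →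
          Ideal.span {a} = ⊤ ∨ Ideal.span {b} = ⊤) := by
  constructor
  · intro hf
    constructor
    · intro h
      rw [Ideal.span_singleton_eq_top] at h
      exact hf.not_isUnit (PowerSeries.isUnit_iff_constantCoeff.mpr h)
    · intro a b hab hsp
      have h1 : (1 : R) ∈ Ideal.span ({a, b} : Set R) := by rw [hsp]; trivial
      obtain ⟨u, v, huv⟩ := Ideal.mem_span_pair.mp h1
      have hmul := auxSeq_mul f a b u v hab huv
      rcases hf.isUnit_or_isUnit hmul.symm with h | h
      · left
        rw [Ideal.span_singleton_eq_top]
        have := PowerSeries.isUnit_constantCoeff _ h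
        simpa [auxSeq] using this
      · right
        rw [Ideal.span_singleton_eq_top]
        have := PowerSeries.isUnit_constantCoeff _ h
        simpa [auxSeq] using this
  · rintro ⟨h0, H⟩
    constructor
    · intro h
      exact h0 (Ideal.span_singleton_eq_top.mpr (PowerSeries.isUnit_constantCoeff f h))
    · intro g h hgh
      have hc0 : PowerSeries.constantCoeff f
          = PowerSeries.constantCoeff g * PowerSeries.constantCoeff h := by
        rw [hgh]; simp
      have hc1 : PowerSeries.coeff 1 f
          = PowerSeries.constantCoeff g * PowerSeries.coeff 1 h
            + PowerSeries.coeff 1 g * PowerSeries.constantCoeff h := by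
        rw [hgh, PowerSeries.coeff_mul, Finset.Nat.sum_antidiagonal_eq_sum_range_succ_mk]
        simp [Finset.sum_range_succ]
      have hsp : Ideal.span ({PowerSeries.constantCoeff g,
          PowerSeries.constantCoeff h} : Set R) = ⊤ := by
        rw [Ideal.eq_top_iff_one]
        have : IsUnit (PowerSeries.coeff 1 f) := Ideal.span_singleton_eq_top.mp hf1
        obtain ⟨w, hw⟩ := this.exists_left_inv
        have : (1 : R) = w * PowerSeries.coeff 1 f := hw.symm
        rw [this, hc1]
        refine Ideal.mem_span_pair.mpr ⟨w * PowerSeries.coeff 1 h,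
          w * PowerSeries.coeff 1 g, by ring⟩
      rcases H _ _ hc0 hsp with hu | hu
      · exact Or.inl (PowerSeries.isUnit_iff_constantCoeff.mpr
          (Ideal.span_singleton_eq_top.mp hu))
      · exact Or.inr (PowerSeries.isUnit_iff_constantCoeff.mpr
          (Ideal.span_singleton_eq_top.mp hu))
end

section
/- Let R be a UFD that is not a PID, and let π, σ ∈ R be nonassociate prime elements with (π, σ) ≠ R. Then for any unit U of R[[X]], the power series πσ + XU is irreducible in R[[X]]. -/
theorem stmt_4 {R : Type*} [CommRing R] [IsDomain R] [UniqueFactorizationMonoid R]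
    (hnotpid : ¬IsPrincipalIdealRing R) (π σ : R) (hπ : Prime π) (hσ : Prime σ)
    (hassoc : ¬Associated π σ) (hps : Ideal.span {π, σ} ≠ ⊤)
    (U : (PowerSeries R)ˣ) :
    Irreducible (PowerSeries.C (π * σ) + PowerSeries.X * (U : PowerSeries R)) := by
  set f := PowerSeries.C (π * σ) + PowerSeries.X * (U : PowerSeries R) with hf
  have hc0 : PowerSeries.constantCoeff f = π * σ := by simp [hf]
  have hc1 : PowerSeries.coeff 1 f = PowerSeries.coeff 0 (U : PowerSeries R) := by
    have h1 : (1 : ℕ) = 0 + 1 := rfl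
    rw [hf, map_add, h1, PowerSeries.coeff_succ_X_mul, PowerSeries.coeff_C]
    simp
  have hu : IsUnit (PowerSeries.coeff 0 (U : PowerSeries R)) := by
    rw [PowerSeries.coeff_zero_eq_constantCoeff]
    exact PowerSeries.isUnit_constantCoeff _ U.isUnit
  -- key auxiliary fact about the factorization of π * σ
  have key : ∀ x y : R, ¬IsUnit x → ¬IsUnit y → x * y = π * σ → π ∣ x → σ ∣ y := by
    intro x y hx hy hxy ⟨x', hx'⟩
    have h2 : x' * y = σ := by
      have : π * (x' * y) = π * σ := by rw [← mul_assoc, ← hx', hxy]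
      exact mul_left_cancel₀ hπ.ne_zero this
    rcases hσ.irreducible.isUnit_or_isUnit h2.symm with h | h
    · obtain ⟨u, hu'⟩ := h
      exact ⟨(↑u⁻¹ : Rˣ), by rw [← h2, ← hu', mul_comm (↑u : R) y, mul_assoc]; simp⟩
    · exact absurd h hy
  constructor
  · rw [PowerSeries.isUnit_iff_constantCoeff, hc0]
    intro h
    exact hπ.not_unit (isUnit_of_mul_isUnit_left h)
  · intro a b hab
    by_contra hcon
    push_neg at hcon
    obtain ⟨ha, hb⟩ := hcon
    rw [PowerSeries.isUnit_iff_constantCoeff] at ha hb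
    set a0 := PowerSeries.constantCoeff a with ha0
    set b0 := PowerSeries.constantCoeff b with hb0
    have hab0 : a0 * b0 = π * σ := by rw [ha0, hb0, ← map_mul, ← hab, hc0]
    have hmem : a0 ∈ Ideal.span {π, σ} ∧ b0 ∈ Ideal.span {π, σ} := by
      have hπmem : π ∈ Ideal.span {π, σ} := Ideal.subset_span (by simp)
      have hσmem : σ ∈ Ideal.span {π, σ} := Ideal.subset_span (by simp)
      have hdvd : π ∣ a0 * b0 := hab0 ▸ dvd_mul_right π σ
      rcases hπ.dvd_mul.mp hdvd with h | h
      · exact ⟨Ideal.mem_of_dvd _ h hπmem,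
          Ideal.mem_of_dvd _ (key a0 b0 ha hb hab0 h) hσmem⟩
      · have hab0' : b0 * a0 = π * σ := by rw [mul_comm]; exact hab0
        exact ⟨Ideal.mem_of_dvd _ (key b0 a0 hb ha hab0' h) hσmem,
          Ideal.mem_of_dvd _ h hπmem⟩
    obtain ⟨hma, hmb⟩ := hmem
    apply hps
    rw [Ideal.eq_top_iff_one]
    have hcoeff : PowerSeries.coeff 0 (U : PowerSeries R) =
        a0 * PowerSeries.coeff 1 b + PowerSeries.coeff 1 a * b0 := by
      rw [← hc1, hab, PowerSeries.coeff_mul]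
      rw [Finset.Nat.sum_antidiagonal_eq_sum_range_succ_mk]
      simp [Finset.sum_range_succ, ha0, hb0, PowerSeries.coeff_zero_eq_constantCoeff,
        add_comm]
    obtain ⟨u, hu'⟩ := hu
    have : (1 : R) = (↑u⁻¹ : Rˣ) * (a0 * PowerSeries.coeff 1 b
        + PowerSeries.coeff 1 a * b0) := by
      rw [← hcoeff, ← hu']; simp
    rw [this]
    exact Ideal.mul_mem_left _ _ (Ideal.add_mem _
      (Ideal.mul_mem_right _ _ hma) (Ideal.mul_mem_left _ _ hmb))
end

section
/- Let R be a commutative ring and f ∈ R[[X]]. Suppose f₀ = a₁a₂⋯a_k where the a_i are pairwise coprime elements of R. Then there exist b₁,…,b_k ∈ R with ∑_i b_i ∏_{j≠i} a_j = 1, and a unique g ∈ X·R[[X]] such that f = (a₁ + b₁g)(a₂ + b₂g)⋯(a_k + b_kg); moreover the factors a_i + b_i g are pairwise coprime in R[[X]]. -/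
open PowerSeries Finset

private lemma stmt5_key {R : Type*} [CommRing R] {k : ℕ} (a b : Fin k → R)
    (n : ℕ) (u v : PowerSeries R) (hu : PowerSeries.constantCoeff u = 0)
    (hv : PowerSeries.constantCoeff v = 0)
    (hd : (PowerSeries.X : PowerSeries R) ^ n ∣ u - v) (s : Finset (Fin k)) :
    (PowerSeries.X : PowerSeries R) ^ (n + 1) ∣
      ((∏ i ∈ s, (PowerSeries.C (a i) + PowerSeries.C (b i) * u))
        - ∏ i ∈ s, (PowerSeries.C (a i) + PowerSeries.C (b i) * v))
      - PowerSeries.C (∑ i ∈ s, b i * ∏ j ∈ s.erase i, a j) * (u - v) := by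
  classical
  induction s using Finset.induction_on with
  | empty => simp
  | @insert i s hi ih =>
    set Pu := ∏ j ∈ s, (PowerSeries.C (a j) + PowerSeries.C (b j) * u) with hPu
    set Pv := ∏ j ∈ s, (PowerSeries.C (a j) + PowerSeries.C (b j) * v) with hPv
    set E := ∑ j ∈ s, b j * ∏ l ∈ s.erase j, a l with hE
    have hsum : (∑ j ∈ insert i s, b j * ∏ l ∈ (insert i s).erase j, a l)
        = b i * ∏ l ∈ s, a l + a i * E := by
      rw [Finset.sum_insert hi, Finset.erase_insert hi, hE, Finset.mul_sum]
      congr 1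
      refine Finset.sum_congr rfl fun j hj => ?_
      have hji : j ≠ i := fun h => hi (h ▸ hj)
      rw [Finset.erase_insert_of_ne (Ne.symm hji), Finset.prod_insert (fun h => hi (Finset.mem_of_mem_erase h))]
      ring
    rw [Finset.prod_insert hi, Finset.prod_insert hi, hsum]
    have hXu : (PowerSeries.X : PowerSeries R) ∣ u := PowerSeries.X_dvd_iff.mpr hu
    have hXn : (PowerSeries.X : PowerSeries R) ^ n ∣ Pu - Pv := by
      have := ih
      have h2 : Pu - Pv = (Pu - Pv - PowerSeries.C E * (u - v)) + PowerSeries.C E * (u - v) := by ring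
      rw [h2]
      exact dvd_add (dvd_trans (pow_dvd_pow _ (Nat.le_succ n)) ih) (Dvd.dvd.mul_left hd _)
    have hPv0 : (PowerSeries.X : PowerSeries R) ∣ (Pv - PowerSeries.C (∏ l ∈ s, a l)) := by
      rw [PowerSeries.X_dvd_iff]
      simp [hPv, hv]
    have h1 : (PowerSeries.X : PowerSeries R) ^ (n + 1) ∣
        PowerSeries.C (a i) * (Pu - Pv - PowerSeries.C E * (u - v)) :=
      Dvd.dvd.mul_left ih _
    have h2 : (PowerSeries.X : PowerSeries R) ^ (n + 1) ∣
        PowerSeries.C (b i) * u * (Pu - Pv) := by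
      rw [pow_succ', mul_assoc]
      exact (mul_dvd_mul hXu hXn).mul_left _
    have h3 : (PowerSeries.X : PowerSeries R) ^ (n + 1) ∣
        PowerSeries.C (b i) * ((u - v) * (Pv - PowerSeries.C (∏ l ∈ s, a l))) := by
      rw [pow_succ]
      exact (mul_dvd_mul hd hPv0).mul_left _
    have heq : ((PowerSeries.C (a i) + PowerSeries.C (b i) * u) * Pu
        - (PowerSeries.C (a i) + PowerSeries.C (b i) * v) * Pv)
        - PowerSeries.C (b i * ∏ l ∈ s, a l + a i * E) * (u - v)
        = PowerSeries.C (a i) * (Pu - Pv - PowerSeries.C E * (u - v))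
          + PowerSeries.C (b i) * u * (Pu - Pv)
          + PowerSeries.C (b i) * ((u - v) * (Pv - PowerSeries.C (∏ l ∈ s, a l))) := by
      rw [map_add, map_mul, map_mul]
      ring
    rw [heq]
    exact dvd_add (dvd_add h1 h2) h3

private lemma stmt5_zero {R : Type*} [CommRing R] (w : PowerSeries R)
    (h : ∀ n : ℕ, (PowerSeries.X : PowerSeries R) ^ n ∣ w) : w = 0 := by
  ext n
  have := PowerSeries.X_pow_dvd_iff.mp (h (n + 1)) n (Nat.lt_succ_self n)
  simpa using this

theorem stmt_5 {R : Type*} [CommRing R] (f : PowerSeries R) (k : ℕ) (hk : 0 < k)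
    (a : Fin k → R) (hf0 : PowerSeries.constantCoeff f = ∏ i, a i)
    (hcop : ∀ i j, i ≠ j → IsCoprime (a i) (a j)) :
    ∃ b : Fin k → R, (∑ i, b i * ∏ j ∈ Finset.univ.erase i, a j) = 1 ∧
      ∃ g : PowerSeries R, PowerSeries.constantCoeff g = 0 ∧
        f = ∏ i, (PowerSeries.C (a i) + PowerSeries.C (b i) * g) ∧
        (∀ g' : PowerSeries R, PowerSeries.constantCoeff g' = 0 →
          f = ∏ i, (PowerSeries.C (a i) + PowerSeries.C (b i) * g') → g' = g) ∧
        (∀ i j, i ≠ j → IsCoprime (PowerSeries.C (a i) + PowerSeries.C (b i) * g)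
          (PowerSeries.C (a j) + PowerSeries.C (b j) * g)) := by
  classical
  have : Nonempty (Fin k) := ⟨⟨0, hk⟩⟩
  -- obtain b
  obtain ⟨b, hb⟩ := (exists_sum_eq_one_iff_pairwise_coprime' (s := a)).mpr
    (fun i j hij => hcop i j hij)
  have hb1 : (∑ i, b i * ∏ j ∈ Finset.univ.erase i, a j) = 1 := by
    simpa [Finset.compl_singleton] using hb
  refine ⟨b, hb1, ?_⟩
  -- the product map
  set P : PowerSeries R → PowerSeries R :=
    fun u => ∏ i, (PowerSeries.C (a i) + PowerSeries.C (b i) * u) with hP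
  -- master lemma
  have master : ∀ (n : ℕ) (u v : PowerSeries R), PowerSeries.constantCoeff u = 0 →
      PowerSeries.constantCoeff v = 0 → (PowerSeries.X : PowerSeries R) ^ n ∣ u - v →
      (PowerSeries.X : PowerSeries R) ^ (n + 1) ∣ (P u - P v) - (u - v) := by
    intro n u v hu hv hd
    have := stmt5_key a b n u v hu hv hd Finset.univ
    rw [hb1, map_one, one_mul] at this
    exact this
  have hPconst : ∀ u : PowerSeries R, PowerSeries.constantCoeff u = 0 →
      PowerSeries.constantCoeff (P u) = PowerSeries.constantCoeff f := by
    intro u hu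
    simp [hP, hu, hf0]
  -- the iteration
  set N : PowerSeries R → PowerSeries R := fun w => w + f - P w with hN
  set U : ℕ → PowerSeries R := fun s => Nat.rec 0 (fun _ w => N w) s with hU
  have hU0 : ∀ s, PowerSeries.constantCoeff (U s) = 0 := by
    intro s
    induction s with
    | zero => simp [hU]
    | succ s ih =>
      have : U (s + 1) = N (U s) := rfl
      rw [this, hN]
      simp only [map_sub, map_add, ih, hPconst (U s) ih]
      ring
  have hUd : ∀ s, (PowerSeries.X : PowerSeries R) ^ s ∣ U (s + 1) - U s := by
    intro s
    induction s with
    | zero => simp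
    | succ s ih =>
      have h1 : U (s + 2) - U (s + 1) = -((P (U (s + 1)) - P (U s)) - (U (s + 1) - U s)) := by
        show N (U (s + 1)) - N (U s) = _
        rw [hN]; ring
      rw [h1]
      exact (master s (U (s + 1)) (U s) (hU0 (s + 1)) (hU0 s) ih).neg_right
  -- coefficients stabilize
  have hstab : ∀ i s t, s ≤ t → i < s →
      PowerSeries.coeff i (U s) = PowerSeries.coeff i (U t) := by
    intro i s t hst his
    induction t with
    | zero => omega
    | succ t iht =>
      rcases Nat.lt_or_ge t s with h | h
      · have : s = t + 1 := by omega
        rw [this]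
      · have h1 : PowerSeries.coeff i (U (t + 1) - U t) = 0 :=
          PowerSeries.X_pow_dvd_iff.mp (hUd t) i (by omega)
        rw [map_sub, sub_eq_zero] at h1
        rw [iht h, ← h1]
  set g : PowerSeries R := PowerSeries.mk fun n => PowerSeries.coeff n (U (n + 1)) with hg
  have hgcoeff : ∀ i, PowerSeries.coeff i g = PowerSeries.coeff i (U (i + 1)) := by
    intro i; simp [hg]
  have hg0 : PowerSeries.constantCoeff g = 0 := by
    rw [← PowerSeries.coeff_zero_eq_constantCoeff_apply, hgcoeff]
    rw [PowerSeries.coeff_zero_eq_constantCoeff_apply]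
    exact hU0 1
  have hgd : ∀ s, (PowerSeries.X : PowerSeries R) ^ s ∣ g - U s := by
    intro s
    rw [PowerSeries.X_pow_dvd_iff]
    intro i his
    rw [map_sub, hgcoeff, hstab i (i + 1) s (by omega) (by omega), sub_self]
  -- P g = f
  have hPg : P g = f := by
    have hall : ∀ s : ℕ, (PowerSeries.X : PowerSeries R) ^ (s + 1) ∣ P g - f := by
      intro s
      have h1 := master s g (U s) hg0 (hU0 s) (hgd s)
      have h2 : P (U s) - f = U s - U (s + 1) := by
        have : U (s + 1) = U s + f - P (U s) := rfl
        rw [this]; ring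
      have h3 : P g - f = ((P g - P (U s)) - (g - U s)) + (g - U (s + 1)) := by
        have := h2
        rw [sub_eq_iff_eq_add] at this
        rw [this]; ring
      rw [h3]
      exact dvd_add h1 (hgd (s + 1))
    have : P g - f = 0 := by
      apply stmt5_zero
      intro n
      cases n with
      | zero => simp
      | succ n => exact hall n
    exact sub_eq_zero.mp this
  refine ⟨g, hg0, hPg.symm, ?_, ?_⟩
  · -- uniqueness
    intro g' hg'0 hfg'
    have hPg' : P g' = f := hfg'.symm
    have hd : ∀ n : ℕ, (PowerSeries.X : PowerSeries R) ^ n ∣ g' - g := by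
      intro n
      induction n with
      | zero => simp
      | succ n ih =>
        have := master n g' g hg'0 hg0 ih
        rw [hPg', hPg, sub_self, zero_sub] at this
        exact (dvd_neg.mp this)
    have : g' - g = 0 := stmt5_zero _ hd
    exact sub_eq_zero.mp this
  · -- coprimality
    intro i j hij
    obtain ⟨x, y, hxy⟩ := hcop i j hij
    set u : PowerSeries R := 1 + PowerSeries.C (x * b i + y * b j) * g with hu
    have huu : IsUnit u := by
      rw [PowerSeries.isUnit_iff_constantCoeff]
      simp [hu, hg0]
    obtain ⟨w, hw⟩ := huu.exists_left_inv
    refine ⟨w * PowerSeries.C x, w * PowerSeries.C y, ?_⟩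
    have hcomb : PowerSeries.C x * (PowerSeries.C (a i) + PowerSeries.C (b i) * g)
        + PowerSeries.C y * (PowerSeries.C (a j) + PowerSeries.C (b j) * g) = u := by
      rw [hu]
      have h1 : (1 : PowerSeries R) = PowerSeries.C (x * a i + y * a j) := by
        rw [hxy, map_one]
      rw [h1, map_add, map_mul, map_mul, map_add, map_mul, map_mul]
      ring
    calc w * PowerSeries.C x * (PowerSeries.C (a i) + PowerSeries.C (b i) * g)
        + w * PowerSeries.C y * (PowerSeries.C (a j) + PowerSeries.C (b j) * g)
        = w * (PowerSeries.C x * (PowerSeries.C (a i) + PowerSeries.C (b i) * g)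
          + PowerSeries.C y * (PowerSeries.C (a j) + PowerSeries.C (b j) * g)) := by ring
      _ = w * u := by rw [hcomb]
      _ = 1 := hw
end

section
/- Let R be a commutative ring, a ∈ R a nonzerodivisor. Then the a-adic completion of R is isomorphic as an R-algebra to R[[X]]/(a − X), and a is a nonzerodivisor in the a-adic completion of R. -/
open PowerSeries Finset

namespace Stmt8

variable {R : Type*} [CommRing R]

/-- Partial sums of the evaluation of a power series at `a`. -/
noncomputable def S (a : R) (n : ℕ) (f : PowerSeries R) : R :=
  ∑ i ∈ Finset.range n, PowerSeries.coeff i f * a ^ i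

lemma smul_top_eq (a : R) (n : ℕ) :
    ((Ideal.span {a}) ^ n • ⊤ : Ideal R) = Ideal.span {a ^ n} := by
  rw [smul_eq_mul, Ideal.mul_top, Ideal.span_singleton_pow]

lemma mem_smul_top (a : R) (n : ℕ) {x : R} (h : a ^ n ∣ x) :
    x ∈ ((Ideal.span {a}) ^ n • ⊤ : Ideal R) := by
  rw [smul_top_eq]; exact Ideal.mem_span_singleton.2 h

lemma mk_eq_mk (a : R) (n : ℕ) {x y : R} (h : a ^ n ∣ x - y) :
    (Ideal.Quotient.mk ((Ideal.span {a}) ^ n • ⊤ : Ideal R) x) = Ideal.Quotient.mk _ y :=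
  Ideal.Quotient.eq.2 (mem_smul_top a n h)

lemma S_eq_trunc_eval (a : R) (n : ℕ) (f : PowerSeries R) :
    S a n f = Polynomial.eval a (trunc n f) := by
  rw [show Polynomial.eval a (trunc n f) = Polynomial.eval₂ (RingHom.id R) a (trunc n f) from rfl,
    eval₂_trunc_eq_sum_range]
  rfl

lemma S_trans (a : R) {m n : ℕ} (hmn : m ≤ n) (f : PowerSeries R) :
    a ^ m ∣ S a n f - S a m f := by
  rw [S, S, ← Finset.sum_Ico_eq_sub _ hmn]
  exact Finset.dvd_sum fun i hi =>
    dvd_mul_of_dvd_right (pow_dvd_pow a (Finset.mem_Ico.1 hi).1) _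

lemma S_congr (a : R) {n : ℕ} {f g : PowerSeries R} (h : trunc n f = trunc n g) :
    S a n f = S a n g := by
  rw [S_eq_trunc_eval, S_eq_trunc_eval, h]

lemma poly_eval_dvd (a : R) (n : ℕ) (p : Polynomial R) :
    a ^ n ∣ Polynomial.eval a p - S a n (p : PowerSeries R) := by
  have h1 : Polynomial.eval a p = S a (max n (p.natDegree + 1)) (p : PowerSeries R) := by
    rw [S, Polynomial.eval_eq_sum_range' (lt_of_lt_of_le (Nat.lt_succ_self _) (le_max_right _ _))]
    exact Finset.sum_congr rfl fun i _ => by rw [Polynomial.coeff_coe]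
  rw [h1]
  exact S_trans a (le_max_left _ _) p

lemma S_mul_dvd (a : R) (n : ℕ) (f g : PowerSeries R) :
    a ^ n ∣ S a n (f * g) - S a n f * S a n g := by
  have h1 : S a n f * S a n g = Polynomial.eval a (trunc n f * trunc n g) := by
    rw [S_eq_trunc_eval, S_eq_trunc_eval, Polynomial.eval_mul]
  have h2 : S a n (((trunc n f * trunc n g : Polynomial R) : PowerSeries R)) = S a n (f * g) := by
    apply S_congr
    rw [Polynomial.coe_mul]
    exact trunc_trunc_mul_trunc f g
  rw [h1, ← h2]
  exact dvd_sub_comm.mp (poly_eval_dvd a n _)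

lemma S_add (a : R) (n : ℕ) (f g : PowerSeries R) :
    S a n (f + g) = S a n f + S a n g := by
  simp [S, add_mul, Finset.sum_add_distrib]

lemma S_zero (a : R) (n : ℕ) : S a n 0 = 0 := by simp [S]

lemma S_one_dvd (a : R) (n : ℕ) : a ^ n ∣ S a n 1 - 1 := by
  cases n with
  | zero => simpa using one_dvd _
  | succ n =>
      have : S a (n + 1) 1 = 1 := by simp [S, PowerSeries.coeff_one]
      simp [this]

lemma S_C_dvd (a r : R) (n : ℕ) : a ^ n ∣ S a n (C r) - r := by
  cases n with
  | zero => simpa using one_dvd _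
  | succ n =>
      have : S a (n + 1) (C r) = r := by simp [S, PowerSeries.coeff_C]
      simp [this]

lemma S_key_dvd (a : R) (n : ℕ) : a ^ n ∣ S a n (C a - X) := by
  match n with
  | 0 => simpa using one_dvd _
  | 1 =>
      have : S a 1 (C a - X) = a := by simp [S]
      rw [this, pow_one]
  | (n+2) =>
      have : S a (n+2) (C a - X) = 0 := by
        rw [S]
        rw [Finset.sum_eq_add_of_mem 0 1 (by simp) (by simp [Nat.lt_add_of_pos_left]) (by omega) ?_]
        · simp
        · intro i hi hne
          simp only [map_sub, PowerSeries.coeff_C, PowerSeries.coeff_X]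
          rcases hne with ⟨h0, h1⟩
          simp [h0, h1]
      rw [this]
      exact dvd_zero _

lemma val_algebraMap (a r : R) (n : ℕ) :
    (algebraMap R (AdicCompletion (Ideal.span {a}) R) r).val n =
      Ideal.Quotient.mk ((Ideal.span {a}) ^ n • ⊤ : Ideal R) r := rfl

/-- The evaluation homomorphism `R⟦X⟧ → AdicCompletion (span {a}) R`, `X ↦ a`. -/
noncomputable def phi (a : R) : PowerSeries R →ₐ[R] AdicCompletion (Ideal.span {a}) R where
  toFun f := ⟨fun n => Ideal.Quotient.mk ((Ideal.span {a}) ^ n • ⊤ : Ideal R) (S a n f),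
    fun {m n} hmn => by
      rw [AdicCompletion.transitionMap_ideal_mk]
      exact mk_eq_mk a m (S_trans a hmn f)⟩
  map_one' := AdicCompletion.ext fun n => by
    show Ideal.Quotient.mk _ (S a n 1) = (1 : AdicCompletion (Ideal.span {a}) R).val n
    rw [AdicCompletion.val_one]
    exact (mk_eq_mk a n (S_one_dvd a n)).trans (map_one _)
  map_mul' f g := AdicCompletion.ext fun n => by
    show Ideal.Quotient.mk _ (S a n (f * g)) = _
    show _ = Ideal.Quotient.mk _ (S a n f) * Ideal.Quotient.mk _ (S a n g)
    rw [← map_mul]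
    exact mk_eq_mk a n (S_mul_dvd a n f g)
  map_zero' := AdicCompletion.ext fun n => by
    show Ideal.Quotient.mk _ (S a n 0) = _
    rw [AdicCompletion.val_zero_apply, S_zero, map_zero]
  map_add' f g := AdicCompletion.ext fun n => by
    show Ideal.Quotient.mk _ (S a n (f + g)) = _
    show _ = Ideal.Quotient.mk _ (S a n f) + Ideal.Quotient.mk _ (S a n g)
    rw [← map_add, S_add]
  commutes' r := AdicCompletion.ext fun n => by
    show Ideal.Quotient.mk _ (S a n ((algebraMap R (PowerSeries R)) r)) = _
    rw [val_algebraMap]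
    exact mk_eq_mk a n (S_C_dvd a r n)

lemma phi_val (a : R) (f : PowerSeries R) (n : ℕ) :
    (phi a f).val n = Ideal.Quotient.mk ((Ideal.span {a}) ^ n • ⊤ : Ideal R) (S a n f) := rfl

lemma phi_surjective (a : R) : Function.Surjective (phi a) := by
  intro x
  obtain ⟨r, rfl⟩ := AdicCompletion.mk_surjective (Ideal.span {a}) R x
  have hdvd : ∀ n : ℕ, a ^ n ∣ r.val (n + 1) - r.val n := by
    intro n
    have h := r.property (Nat.le_succ n)
    rw [SModEq.def, Submodule.Quotient.eq'] at h
    rw [smul_top_eq] at h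
    rw [← Ideal.mem_span_singleton]
    simpa [neg_add_eq_sub] using h
  choose c hc using hdvd
  set f : PowerSeries R := PowerSeries.mk (fun i => if i = 0 then r.val 1 else c i) with hf
  have hS : ∀ n : ℕ, S a (n + 1) f = r.val (n + 1) := by
    intro n
    induction n with
    | zero => simp [S, hf]
    | succ n ih =>
        rw [S, Finset.sum_range_succ, ← S, ih, hf]
        simp only [PowerSeries.coeff_mk, if_neg (Nat.succ_ne_zero n)]
        rw [mul_comm, ← hc (n + 1)]
        ring
  refine ⟨f, AdicCompletion.ext fun n => ?_⟩
  rw [phi_val]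
  show _ = Submodule.mkQ _ (r.val n)
  cases n with
  | zero => exact mk_eq_mk a 0 (by simpa using one_dvd (S a 0 f - r.val 0))
  | succ n => exact mk_eq_mk a (n+1) (by rw [hS n]; simp)

lemma phi_ker (a : R) (ha : a ∈ nonZeroDivisors R) :
    RingHom.ker (phi a) = Ideal.span {C a - X} := by
  apply le_antisymm
  · intro f hf
    rw [RingHom.mem_ker] at hf
    have hdvd : ∀ n : ℕ, a ^ n ∣ S a n f := by
      intro n
      have h : (phi a f).val n = 0 := by rw [hf]; rfl
      rw [phi_val, Ideal.Quotient.eq_zero_iff_mem, smul_top_eq, Ideal.mem_span_singleton] at h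
      exact h
    choose g' hg' using fun n => hdvd (n + 1)
    refine Ideal.mem_span_singleton.2 ⟨PowerSeries.mk g', ?_⟩
    ext k
    rw [sub_mul, map_sub]
    rcases k with - | k
    · rw [PowerSeries.coeff_zero_X_mul, PowerSeries.coeff_C_mul, PowerSeries.coeff_mk, sub_zero]
      have h0 := hg' 0
      rw [S, Finset.sum_range_one, pow_zero, mul_one, pow_one] at h0
      exact h0
    · rw [PowerSeries.coeff_succ_X_mul, PowerSeries.coeff_C_mul, PowerSeries.coeff_mk,
        PowerSeries.coeff_mk]
      have h1 := hg' (k + 1)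
      have h2 := hg' k
      rw [S, Finset.sum_range_succ, ← S, h2] at h1
      have hcancel : g' k + PowerSeries.coeff (k + 1) f = a * g' (k + 1) := by
        have hpow : a ^ (k + 1) ∈ nonZeroDivisors R := pow_mem ha _
        apply (mul_cancel_left_mem_nonZeroDivisors hpow).mp
        rw [mul_add]
        linear_combination h1
      linear_combination hcancel
  · rw [Ideal.span_le, Set.singleton_subset_iff, SetLike.mem_coe, RingHom.mem_ker]
    refine AdicCompletion.ext fun n => ?_
    rw [phi_val]
    show _ = (0 : AdicCompletion (Ideal.span {a}) R).val n
    rw [AdicCompletion.val_zero_apply,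
      ← map_zero (Ideal.Quotient.mk ((Ideal.span {a}) ^ n • ⊤ : Ideal R))]
    exact mk_eq_mk a n (by simpa using S_key_dvd a n)

end Stmt8

theorem stmt_8 {R : Type*} [CommRing R] (a : R) (ha : a ∈ nonZeroDivisors R) :
    Nonempty (AdicCompletion (Ideal.span {a}) R ≃ₐ[R]
      (PowerSeries R ⧸ Ideal.span {PowerSeries.C a - PowerSeries.X})) ∧
    algebraMap R (AdicCompletion (Ideal.span {a}) R) a ∈
      nonZeroDivisors (AdicCompletion (Ideal.span {a}) R) := by
  constructor
  · exact ⟨((Ideal.quotientKerAlgEquivOfSurjective (Stmt8.phi_surjective a)).symm.trans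
      (Ideal.quotientEquivAlgOfEq R (Stmt8.phi_ker a ha)))⟩
  · rw [mem_nonZeroDivisors_iff_right]
    intro x hx
    have hs : a • x = 0 := by
      rw [Algebra.smul_def, mul_comm]
      exact hx
    refine AdicCompletion.ext fun n => ?_
    obtain ⟨r, hr⟩ := Submodule.Quotient.mk_surjective _ (x.val (n + 1))
    have h1 : a • x.val (n + 1) = 0 := by
      rw [← AdicCompletion.val_smul_apply, hs, AdicCompletion.val_zero_apply]
    rw [← hr, ← Submodule.Quotient.mk_smul, Submodule.Quotient.mk_eq_zero,
      Stmt8.smul_top_eq, smul_eq_mul, Ideal.mem_span_singleton] at h1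
    obtain ⟨c, hc⟩ := h1
    have hr' : r = a ^ n * c := by
      apply (mul_cancel_left_mem_nonZeroDivisors ha).mp
      rw [hc, pow_succ]
      ring
    have h2 : x.val n = Submodule.Quotient.mk r := by
      rw [← x.property (Nat.le_succ n), ← hr]; rfl
    rw [h2, AdicCompletion.val_zero_apply, Submodule.Quotient.mk_eq_zero]
    exact Stmt8.mem_smul_top a n ⟨c, hr'⟩
end

section
/- Let R be a commutative ring and f ∈ R[[X]] with f₀ a nonzerodivisor in R. Then the quotient ring S = R[[X]]/(f) is complete with respect to the ideal f₀S, i.e., the natural map S → lim S/(f₀ⁿS) is an isomorphism. -/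
open PowerSeries Finset

namespace Stmt9Aux

variable {R : Type*} [CommRing R]

/-- If the constant coefficient of `f` is a nonzerodivisor and `X^n ∣ f * t`, then `X^n ∣ t`. -/
theorem key_dvd {f : PowerSeries R} (hf0 : constantCoeff f ∈ nonZeroDivisors R)
    {n : ℕ} {t : PowerSeries R} (h : (X : PowerSeries R) ^ n ∣ f * t) :
    (X : PowerSeries R) ^ n ∣ t := by
  rw [PowerSeries.X_pow_dvd_iff] at h ⊢
  intro m hm
  induction m using Nat.strong_induction_on with
  | _ m ih =>
    have hc := h m hm
    rw [PowerSeries.coeff_mul] at hc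
    rw [Finset.sum_eq_single (0, m)] at hc
    · rw [PowerSeries.coeff_zero_eq_constantCoeff] at hc
      exact mem_nonZeroDivisors_iff_right.mp hf0 _ (by rwa [mul_comm])
    · rintro ⟨i, j⟩ hb hne
      rw [Finset.HasAntidiagonal.mem_antidiagonal] at hb
      have hj : j < m := by
        rcases Nat.lt_or_ge j m with h' | h'
        · exact h'
        · exfalso; apply hne
          have hjm : j = m := le_antisymm (by omega) h'
          have hi : i = 0 := by omega
          rw [hi, hjm]
      rw [ih j hj (hj.trans hm), mul_zero]
    · intro hmem
      exact absurd (Finset.HasAntidiagonal.mem_antidiagonal.mpr (by simp)) hmem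

/-- X-adic limit of a Cauchy sequence of power series. -/
theorem limit_exists (v : ℕ → PowerSeries R)
    (hv : ∀ m n : ℕ, m ≤ n → (X : PowerSeries R) ^ m ∣ v n - v m) :
    ∃ V : PowerSeries R, ∀ n, (X : PowerSeries R) ^ n ∣ v n - V := by
  refine ⟨PowerSeries.mk fun k => PowerSeries.coeff k (v (k + 1)), fun n => ?_⟩
  rw [PowerSeries.X_pow_dvd_iff]
  intro k hk
  have h1 := hv (k + 1) n hk
  rw [PowerSeries.X_pow_dvd_iff] at h1
  have h2 := h1 k (Nat.lt_succ_self k)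
  simp only [map_sub, PowerSeries.coeff_mk] at h2 ⊢
  exact h2


/-- Coefficient `k` of a product only depends on coefficients `≤ k` of a factor. -/
theorem coeff_mul_congr {c A A' : PowerSeries R} {k : ℕ}
    (h : ∀ j ≤ k, PowerSeries.coeff j A = PowerSeries.coeff j A') :
    PowerSeries.coeff k (c * A) = PowerSeries.coeff k (c * A') := by
  rw [PowerSeries.coeff_mul, PowerSeries.coeff_mul]
  refine Finset.sum_congr rfl ?_
  rintro ⟨i, j⟩ hp
  rw [Finset.HasAntidiagonal.mem_antidiagonal] at hp
  rw [h j (by omega)]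

/-- Stability of coefficients of partial sums. -/
theorem coeff_sum_stable (e : ℕ → PowerSeries R) (he : ∀ j, (X : PowerSeries R) ^ j ∣ e j)
    {k m m' : ℕ} (h1 : k < m) (h2 : m ≤ m') :
    PowerSeries.coeff k (∑ j ∈ Finset.range m', e j) =
      PowerSeries.coeff k (∑ j ∈ Finset.range m, e j) := by
  rw [Finset.range_eq_Ico, ← Finset.sum_Ico_consecutive _ (Nat.zero_le m) h2]
  rw [map_add, ← Finset.range_eq_Ico, add_eq_left]
  rw [map_sum]
  refine Finset.sum_eq_zero fun j hj => ?_
  rw [Finset.mem_Ico] at hj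
  have := he j
  rw [PowerSeries.X_pow_dvd_iff] at this
  exact this k (by omega)

theorem smod_zero_iff {S : Type*} [CommRing S] (I : Ideal S) (n : ℕ) (x : S) :
    x ≡ 0 [SMOD (I ^ n • ⊤ : Submodule S S)] ↔ x ∈ I ^ n := by
  rw [smul_eq_mul, Ideal.mul_top]; exact SModEq.zero

theorem smod_sub_iff {S : Type*} [CommRing S] (I : Ideal S) (n : ℕ) (x y : S) :
    x ≡ y [SMOD (I ^ n • ⊤ : Submodule S S)] ↔ x - y ∈ I ^ n := by
  rw [smul_eq_mul, Ideal.mul_top]; exact SModEq.sub_mem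

end Stmt9Aux

open Stmt9Aux in
set_option maxHeartbeats 1000000 in
set_option synthInstance.maxHeartbeats 200000 in
theorem stmt_9 {R : Type*} [CommRing R] (f : PowerSeries R)
    (hf0 : PowerSeries.constantCoeff f ∈ nonZeroDivisors R) :
    IsAdicComplete
      (Ideal.span {Ideal.Quotient.mk (Ideal.span {f})
        (PowerSeries.C (PowerSeries.constantCoeff f))})
      (PowerSeries R ⧸ Ideal.span {f}) := by
  set a := PowerSeries.constantCoeff f with ha
  set π := Ideal.Quotient.mk (Ideal.span {f}) with hπdef
  obtain ⟨b, hXb, hCab⟩ : ∃ b : PowerSeries R, (X : PowerSeries R) ∣ b ∧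
      PowerSeries.C a - b = f :=
    ⟨-(X * PowerSeries.mk fun p => PowerSeries.coeff (p + 1) f),
      (dvd_mul_right _ _).neg_right,
      by linear_combination - PowerSeries.eq_X_mul_shift_add_const f⟩
  have hfd : ∀ n : ℕ, f ∣ (PowerSeries.C a) ^ n - b ^ n := fun n =>
    hCab ▸ sub_dvd_pow_sub_pow (PowerSeries.C a) b n
  have hπpow : ∀ n : ℕ, (π (PowerSeries.C a)) ^ n = π (b ^ n) := by
    intro n
    rw [← map_pow, Ideal.Quotient.mk_eq_mk_iff_sub_mem, Ideal.mem_span_singleton]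
    exact hfd n
  have hIpow : ∀ n : ℕ, (Ideal.span {π (PowerSeries.C a)}) ^ n =
      Ideal.span {π (b ^ n)} := by
    intro n
    rw [Ideal.span_singleton_pow, hπpow]
  have memb : ∀ (n : ℕ) (h : PowerSeries R),
      π h ∈ (Ideal.span {π (PowerSeries.C a)}) ^ n ↔
        ∃ u w : PowerSeries R, h = b ^ n * u + f * w := by
    intro n h
    rw [hIpow, Ideal.mem_span_singleton]
    constructor
    · rintro ⟨c, hc⟩
      obtain ⟨u, rfl⟩ := Ideal.Quotient.mk_surjective c
      have : π (h - b ^ n * u) = 0 := by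
        rw [map_sub, map_mul, hc]; ring
      rw [Ideal.Quotient.eq_zero_iff_mem, Ideal.mem_span_singleton] at this
      obtain ⟨w, hw⟩ := this
      exact ⟨u, w, by linear_combination hw⟩
    · rintro ⟨u, w, rfl⟩
      refine ⟨π u, ?_⟩
      have hfz : π f = 0 :=
        Ideal.Quotient.eq_zero_iff_mem.mpr (Ideal.mem_span_singleton_self f)
      rw [map_add, map_mul, map_mul, hfz, zero_mul, add_zero]
  have hHaus : IsHausdorff (Ideal.span {π (PowerSeries.C a)})
      (PowerSeries R ⧸ Ideal.span {f}) := by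
    constructor
    intro x hx
    obtain ⟨h, rfl⟩ := Ideal.Quotient.mk_surjective x
    have hx' : ∀ n : ℕ, ∃ u w : PowerSeries R, h = b ^ n * u + f * w := by
      intro n
      have := hx n
      rw [smod_zero_iff] at this
      exact (memb n h).mp this
    choose u w hw using hx'
    have hcau : ∀ m n : ℕ, m ≤ n → (X : PowerSeries R) ^ m ∣ w n - w m := by
      intro m n hmn
      apply key_dvd hf0
      have heq : f * (w n - w m) = b ^ m * u m - b ^ n * u n := by
        linear_combination hw m - hw n
      rw [heq]
      exact dvd_sub ((pow_dvd_pow_of_dvd hXb m).mul_right _)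
        (((pow_dvd_pow (X : PowerSeries R) hmn).trans
          (pow_dvd_pow_of_dvd hXb n)).mul_right _)
    obtain ⟨V, hV⟩ := limit_exists w hcau
    have hfV : h = f * V := by
      have hdvd : ∀ n : ℕ, (X : PowerSeries R) ^ n ∣ h - f * V := by
        intro n
        have heq : h - f * V = b ^ n * u n + f * (w n - V) := by
          linear_combination hw n
        rw [heq]
        exact dvd_add ((pow_dvd_pow_of_dvd hXb n).mul_right _) ((hV n).mul_left f)
      have : h - f * V = 0 := by
        ext k
        have := hdvd (k + 1)
        rw [PowerSeries.X_pow_dvd_iff] at this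
        rw [this k (Nat.lt_succ_self k), map_zero]
      linear_combination this
    exact Ideal.Quotient.eq_zero_iff_mem.mpr
      (Ideal.mem_span_singleton.mpr ⟨V, hfV⟩)
  have hPre : IsPrecomplete (Ideal.span {π (PowerSeries.C a)})
      (PowerSeries R ⧸ Ideal.span {f}) := by
    constructor
    intro s hs
    have hd : ∀ n : ℕ, ∃ t : PowerSeries R, π (b ^ n * t) = s (n + 1) - s n := by
      intro n
      have h1 := hs (Nat.le_succ n)
      rw [smod_sub_iff] at h1
      have h2 : s (n + 1) - s n ∈ (Ideal.span {π (PowerSeries.C a)}) ^ n := by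
        have := neg_mem h1
        rwa [neg_sub] at this
      rw [hIpow, Ideal.mem_span_singleton] at h2
      obtain ⟨c, hc⟩ := h2
      obtain ⟨t, rfl⟩ := Ideal.Quotient.mk_surjective c
      exact ⟨t, by rw [map_mul, ← hc]⟩
    choose t ht using hd
    obtain ⟨h0, hh0⟩ := Ideal.Quotient.mk_surjective (s 0)
    have hedvd : ∀ j : ℕ, (X : PowerSeries R) ^ j ∣ b ^ j * t j := fun j =>
      (pow_dvd_pow_of_dvd hXb j).mul_right _
    have hH : ∀ n : ℕ, π (h0 + ∑ j ∈ Finset.range n, b ^ j * t j) = s n := by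
      intro n
      induction n with
      | zero => simpa using hh0
      | succ n ih =>
        rw [Finset.sum_range_succ, ← add_assoc, map_add, ih, ht n]
        ring
    -- the limit
    set L := PowerSeries.mk fun k =>
      PowerSeries.coeff k (h0 + ∑ j ∈ Finset.range (k + 1), b ^ j * t j) with hLdef
    have hLH : ∀ n : ℕ, ∃ U : PowerSeries R,
        L - (h0 + ∑ j ∈ Finset.range n, b ^ j * t j) = b ^ n * U := by
      intro n
      refine ⟨PowerSeries.mk fun k =>
        PowerSeries.coeff k (∑ j ∈ Finset.range (k + 1), b ^ j * t (n + j)), ?_⟩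
      ext k
      have lhs : PowerSeries.coeff k
          (L - (h0 + ∑ j ∈ Finset.range n, b ^ j * t j)) =
          PowerSeries.coeff k (∑ j ∈ Finset.Ico n (n + k + 1), b ^ j * t j) := by
        rw [map_sub, hLdef, PowerSeries.coeff_mk, map_add, map_add,
          ← coeff_sum_stable (fun j => b ^ j * t j) hedvd (Nat.lt_succ_self k)
            (by omega : k + 1 ≤ n + k + 1)]
        rw [← Finset.sum_range_add_sum_Ico (fun j => b ^ j * t j)
          (by omega : n ≤ n + k + 1), map_add]
        ring
      rw [lhs]
      -- RHS
      have hcong : PowerSeries.coeff k (b ^ n *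
          PowerSeries.mk fun k' => PowerSeries.coeff k'
            (∑ j ∈ Finset.range (k' + 1), b ^ j * t (n + j))) =
          PowerSeries.coeff k (b ^ n *
            ∑ j ∈ Finset.range (k + 1), b ^ j * t (n + j)) := by
        apply coeff_mul_congr
        intro j hj
        rw [PowerSeries.coeff_mk]
        exact (coeff_sum_stable (fun i => b ^ i * t (n + i))
          (fun i => (pow_dvd_pow_of_dvd hXb i).mul_right _)
          (Nat.lt_succ_self j) (by omega : j + 1 ≤ k + 1)).symm
      rw [hcong, Finset.mul_sum, Finset.sum_Ico_eq_sum_range]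
      have hkk : n + k + 1 - n = k + 1 := by omega
      rw [hkk]
      congr 1
      refine Finset.sum_congr rfl fun j _ => ?_
      rw [pow_add]; ring
    refine ⟨π L, fun n => ?_⟩
    rw [smod_sub_iff]
    obtain ⟨U, hU⟩ := hLH n
    have : s n - π L = π (-(b ^ n * U)) := by
      rw [← hU, map_neg, map_sub, hH n]
      ring
    rw [this, hIpow, Ideal.mem_span_singleton, map_neg, map_mul]
    exact (dvd_mul_right _ _).neg_right
  exact { toIsHausdorff := hHaus, toIsPrecomplete := hPre }
end

section
/- Let R be a commutative ring, 𝔞 an ideal of R with ⋂ₙ 𝔞ⁿ = (0), and P an 𝔞-Weierstrass polynomial in R[X]. If F = hP with F ∈ R[X] a polynomial and h ∈ R[[X]] a power series, then h is a polynomial, i.e., h ∈ R[X]. -/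
theorem stmt_10 {R : Type*} [CommRing R] (𝔞 : Ideal R) (hHaus : (⨅ n : ℕ, 𝔞 ^ n) = ⊥)
    (P : Polynomial R) (hP : P.Monic) (hPW : ∀ i < P.natDegree, P.coeff i ∈ 𝔞)
    (F : Polynomial R) (h : PowerSeries R)
    (hFh : (F : PowerSeries R) = h * (P : PowerSeries R)) :
    ∃ H : Polynomial R, (H : PowerSeries R) = h := by
  rcases subsingleton_or_nontrivial R with hR | hR
  · exact ⟨0, Subsingleton.elim _ _⟩
  set n := P.natDegree with hn
  set Q := F /ₘ P with hQ
  set S := F %ₘ P with hS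
  have hdeg : S.degree < P.degree := Polynomial.degree_modByMonic_lt F hP
  have hFQS : F = S + P * Q := (Polynomial.modByMonic_add_div F P).symm
  set g : PowerSeries R := h - (Q : PowerSeries R) with hgdef
  have hg : g * (P : PowerSeries R) = (S : PowerSeries R) := by
    have hcast : (F : PowerSeries R) = (S : PowerSeries R)
        + (P : PowerSeries R) * (Q : PowerSeries R) := by
      rw [hFQS]; push_cast; ring
    rw [hgdef, sub_mul, ← hFh, hcast]; ring
  have key : ∀ m k, (PowerSeries.coeff k) g ∈ 𝔞 ^ m := by
    intro m
    induction m with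
    | zero => intro k; simp
    | succ m ih =>
      intro k
      have h0 : (PowerSeries.coeff (n + k)) (g * (P : PowerSeries R)) = 0 := by
        rw [hg, Polynomial.coeff_coe]
        apply Polynomial.coeff_eq_zero_of_degree_lt
        calc S.degree < P.degree := hdeg
          _ = (n : WithBot ℕ) := Polynomial.degree_eq_natDegree hP.ne_zero
          _ ≤ ((n + k : ℕ) : WithBot ℕ) := by exact_mod_cast Nat.le_add_right n k
      rw [PowerSeries.coeff_mul] at h0
      have hmem : ((k, n) : ℕ × ℕ) ∈ Finset.HasAntidiagonal.antidiagonal (n + k) := by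
        simp [add_comm]
      rw [← Finset.add_sum_erase _ _ hmem] at h0
      have hPn : (PowerSeries.coeff n) (P : PowerSeries R) = 1 := by
        rw [Polynomial.coeff_coe]; exact hP.coeff_natDegree
      have hsum : ∑ p ∈ (Finset.HasAntidiagonal.antidiagonal (n + k)).erase (k, n),
          (PowerSeries.coeff p.1) g * (PowerSeries.coeff p.2) (P : PowerSeries R)
          ∈ 𝔞 ^ (m + 1) := by
        apply Ideal.sum_mem
        intro p hp
        obtain ⟨hpne, hpad⟩ := Finset.mem_erase.mp hp
        rw [Finset.HasAntidiagonal.mem_antidiagonal] at hpad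
        rcases lt_or_ge p.2 n with hlt | hge
        · rw [pow_succ, Polynomial.coeff_coe]
          exact Ideal.mul_mem_mul (ih p.1) (hPW p.2 hlt)
        · have hgt : n < p.2 := by
            rcases lt_or_eq_of_le hge with hgt | heq
            · exact hgt
            · exfalso
              apply hpne
              have hp1 : p.1 = k := by omega
              exact Prod.ext hp1 heq.symm
          rw [Polynomial.coeff_coe, Polynomial.coeff_eq_zero_of_natDegree_lt hgt,
            mul_zero]
          exact zero_mem _
      have heq : (PowerSeries.coeff k) g
          = -∑ p ∈ (Finset.HasAntidiagonal.antidiagonal (n + k)).erase (k, n),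
            (PowerSeries.coeff p.1) g * (PowerSeries.coeff p.2) (P : PowerSeries R) := by
        rw [hPn, mul_one] at h0
        exact eq_neg_of_add_eq_zero_left h0
      rw [heq]
      exact neg_mem hsum
  have hg0 : g = 0 := by
    ext k
    have hmem : (PowerSeries.coeff k) g ∈ ⨅ m : ℕ, 𝔞 ^ m :=
      Ideal.mem_iInf.mpr fun m => key m k
    rw [hHaus] at hmem
    simpa using hmem
  exact ⟨Q, by have := sub_eq_zero.mp hg0; rw [this]⟩
end

section
/- Let R be a commutative ring, 𝔞 an ideal of R such that R is complete with respect to some 𝔞-filtration, and P an 𝔞-Weierstrass polynomial in R[X]. Then the natural R[X]-algebra homomorphism R[X]/(P) → R[[X]]/(P) is an isomorphism. -/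
open PowerSeries Polynomial

namespace Stmt11Aux

variable {R : Type*} [CommRing R]

lemma coeffA (𝔞 : Ideal R) (P : Polynomial R) (hP : P.Monic)
    (hPW : ∀ i < P.natDegree, P.coeff i ∈ 𝔞) (i : ℕ) :
    PowerSeries.coeff (R := R) i ((P : PowerSeries R) - (PowerSeries.X) ^ P.natDegree) ∈ 𝔞 := by
  rw [map_sub, Polynomial.coeff_coe, PowerSeries.coeff_X_pow]
  rcases lt_trichotomy i P.natDegree with h | h | h
  · rw [if_neg (Nat.ne_of_lt h), sub_zero]; exact hPW i h
  · subst h; simp [hP.coeff_natDegree]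
  · rw [P.coeff_eq_zero_of_natDegree_lt h, if_neg (Nat.ne_of_gt h)]; simp

lemma mul_mem_coeff {I J : Ideal R} {u v : PowerSeries R}
    (hu : ∀ i, PowerSeries.coeff (R := R) i u ∈ I) (hv : ∀ i, PowerSeries.coeff (R := R) i v ∈ J)
    (i : ℕ) : PowerSeries.coeff (R := R) i (u * v) ∈ I * J := by
  rw [PowerSeries.coeff_mul]
  exact Ideal.sum_mem _ fun p _ => Ideal.mul_mem_mul (hu p.1) (hv p.2)

lemma mul_mem_coeff' {I : Ideal R} {u v : PowerSeries R}
    (hu : ∀ i, PowerSeries.coeff (R := R) i u ∈ I) (i : ℕ) :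
    PowerSeries.coeff (R := R) i (u * v) ∈ I := by
  rw [PowerSeries.coeff_mul]
  exact Ideal.sum_mem _ fun p _ => Ideal.mul_mem_right _ _ (hu p.1)

/-- Uniqueness part: if `u * P` has vanishing coefficients in degrees `≥ natDegree P`,
then `u = 0`. -/
lemma eq_zero_of_mul (𝔞 : Ideal R) (𝔣 : ℕ → Ideal R)
    (hfa : ∀ i, ∃ m : ℕ, 𝔞 ^ m ≤ 𝔣 i) (hHaus : (⨅ i, 𝔣 i) = ⊥)
    (P : Polynomial R) (hP : P.Monic) (hPW : ∀ i < P.natDegree, P.coeff i ∈ 𝔞)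
    (u : PowerSeries R)
    (h : ∀ j, P.natDegree ≤ j → PowerSeries.coeff (R := R) j (u * (P : PowerSeries R)) = 0) :
    u = 0 := by
  set n := P.natDegree with hn
  set A : PowerSeries R := (P : PowerSeries R) - (PowerSeries.X) ^ n with hA
  have hPXA : (P : PowerSeries R) = PowerSeries.X ^ n + A := by rw [hA]; ring
  have key : ∀ k i, PowerSeries.coeff (R := R) i u ∈ 𝔞 ^ k := by
    intro k
    induction k with
    | zero => intro i; simpa using Submodule.mem_top
    | succ k ih =>
      intro i
      have h1 : PowerSeries.coeff (R := R) (i + n) (u * (P : PowerSeries R)) =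
          PowerSeries.coeff (R := R) i u + PowerSeries.coeff (R := R) (i + n) (u * A) := by
        conv_lhs => rw [hPXA]
        rw [mul_add, map_add, PowerSeries.coeff_mul_X_pow]
      have h2 := h (i + n) (by omega)
      have h3 : PowerSeries.coeff (R := R) i u = - PowerSeries.coeff (R := R) (i + n) (u * A) := by
        rw [h1] at h2; exact eq_neg_of_add_eq_zero_left h2
      rw [h3, pow_succ]
      exact neg_mem (mul_mem_coeff ih (coeffA 𝔞 P hP hPW) (i + n))
  ext i
  have : PowerSeries.coeff (R := R) i u ∈ ⨅ j, 𝔣 j := by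
    rw [Submodule.mem_iInf]
    intro j
    obtain ⟨m, hm⟩ := hfa j
    exact hm (key m i)
  rw [hHaus] at this
  simpa using this

/-- Weierstrass division, existence. -/
lemma exists_div (𝔞 : Ideal R) (𝔣 : ℕ → Ideal R)
    (hfa : ∀ i, ∃ m : ℕ, 𝔞 ^ m ≤ 𝔣 i) (hHaus : (⨅ i, 𝔣 i) = ⊥)
    (hcomplete : ∀ a : ℕ → R, (∀ i j, i ≤ j → a j - a i ∈ 𝔣 i) →
      ∃ b : R, ∀ i, b - a i ∈ 𝔣 i)
    (P : Polynomial R) (hP : P.Monic) (hPW : ∀ i < P.natDegree, P.coeff i ∈ 𝔞)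
    (f : PowerSeries R) :
    ∃ (Q : PowerSeries R) (r : Polynomial R), f = Q * (P : PowerSeries R) + (r : PowerSeries R) := by
  classical
  set n := P.natDegree with hn
  set A : PowerSeries R := (P : PowerSeries R) - (PowerSeries.X) ^ n with hA
  have hPXA : (P : PowerSeries R) = PowerSeries.X ^ n + A := by rw [hA]; ring
  have hmulP : ∀ (v : PowerSeries R) (i : ℕ),
      PowerSeries.coeff (R := R) (i + n) (v * (P : PowerSeries R)) =
        PowerSeries.coeff (R := R) i v + PowerSeries.coeff (R := R) (i + n) (v * A) := by
    intro v i
    conv_lhs => rw [hPXA]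
    rw [mul_add, map_add, PowerSeries.coeff_mul_X_pow]
  -- shift operator
  set s : PowerSeries R → PowerSeries R :=
    fun u => PowerSeries.mk fun i => PowerSeries.coeff (R := R) (i + n) u with hs
  have hscoeff : ∀ u i, PowerSeries.coeff (R := R) i (s u) = PowerSeries.coeff (R := R) (i + n) u := by
    intro u i; rw [hs]; simp
  -- approximation sequence
  set q : ℕ → PowerSeries R :=
    fun k => Nat.rec 0 (fun _ qk => s f - s (qk * A)) k with hq
  have hq0 : q 0 = 0 := rfl
  have hqs : ∀ k, q (k + 1) = s f - s (q k * A) := fun k => rfl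
  -- successive differences
  have hd : ∀ k i, PowerSeries.coeff (R := R) i (q (k + 1) - q k) ∈ 𝔞 ^ k := by
    intro k
    induction k with
    | zero => intro i; simpa using Submodule.mem_top
    | succ k ih =>
      intro i
      have e : q (k + 2) - q (k + 1) =
          (s f - s (q (k + 1) * A)) - (s f - s (q k * A)) := by
        rw [← hqs k, ← hqs (k + 1)]
      have : PowerSeries.coeff (R := R) i (q (k + 2) - q (k + 1)) =
          - PowerSeries.coeff (R := R) (i + n) ((q (k + 1) - q k) * A) := by
        rw [e]
        simp only [map_sub, hscoeff, sub_mul]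
        ring
      rw [this, pow_succ]
      exact neg_mem (mul_mem_coeff ih (coeffA 𝔞 P hP hPW) (i + n))
  have hd' : ∀ k l, k ≤ l → ∀ i, PowerSeries.coeff (R := R) i (q l - q k) ∈ 𝔞 ^ k := by
    intro k l hkl
    induction l, hkl using Nat.le_induction with
    | base => intro i; simp
    | succ l hkl ih =>
      intro i
      have : PowerSeries.coeff (R := R) i (q (l + 1) - q k) =
          PowerSeries.coeff (R := R) i (q (l + 1) - q l) + PowerSeries.coeff (R := R) i (q l - q k) := by
        rw [← map_add]; congr 1; ring
      rw [this]
      exact add_mem (Ideal.pow_le_pow_right hkl (hd l i)) (ih i)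
  -- remainder identity
  have hrem : ∀ k j, n ≤ j →
      PowerSeries.coeff (R := R) j (f - q k * (P : PowerSeries R)) =
        PowerSeries.coeff (R := R) (j - n) (q (k + 1) - q k) := by
    intro k j hj
    obtain ⟨i, rfl⟩ : ∃ i, j = i + n := ⟨j - n, by omega⟩
    have hin : i + n - n = i := by omega
    have hq1 : PowerSeries.coeff (R := R) i (q (k + 1)) =
        PowerSeries.coeff (R := R) (i + n) f - PowerSeries.coeff (R := R) (i + n) (q k * A) := by
      rw [hqs k]
      simp only [map_sub, hscoeff]
    rw [hin, map_sub, map_sub, hmulP, hq1]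
    ring
  -- choose exponents
  have hm : ∀ j, 𝔞 ^ (hfa j).choose ≤ 𝔣 j := fun j => (hfa j).choose_spec
  set M : ℕ → ℕ :=
    fun j => Nat.rec (hfa 0).choose (fun j' Mj => max Mj (hfa (j' + 1)).choose) j with hM
  have hMmono : Monotone M := by
    apply monotone_nat_of_le_succ
    intro j
    exact le_max_left _ _
  have hMge : ∀ j, (hfa j).choose ≤ M j := by
    intro j
    cases j with
    | zero => exact le_refl _
    | succ j => exact le_max_right _ _
  have hMle : ∀ j, 𝔞 ^ (M j) ≤ 𝔣 j :=
    fun j => le_trans (Ideal.pow_le_pow_right (hMge j)) (hm j)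
  -- limit coefficients
  have hb : ∀ i : ℕ, ∃ b : R, ∀ j, b - PowerSeries.coeff (R := R) i (q (M j)) ∈ 𝔣 j := by
    intro i
    apply hcomplete (fun j => PowerSeries.coeff (R := R) i (q (M j)))
    intro j₁ j₂ hj
    have := hd' (M j₁) (M j₂) (hMmono hj) i
    rw [map_sub] at this
    exact hMle j₁ this
  choose b hbspec using hb
  set Q : PowerSeries R := PowerSeries.mk b with hQdef
  have hQ : ∀ m i, PowerSeries.coeff (R := R) i (Q - q (M m)) ∈ 𝔣 m := by
    intro m i
    rw [map_sub, hQdef, PowerSeries.coeff_mk]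
    exact hbspec i m
  -- f - Q * P vanishes in degrees ≥ n
  have hvanish : ∀ j, n ≤ j → PowerSeries.coeff (R := R) j (f - Q * (P : PowerSeries R)) = 0 := by
    intro j hj
    have hmem : ∀ m, PowerSeries.coeff (R := R) j (f - Q * (P : PowerSeries R)) ∈ 𝔣 m := by
      intro m
      have hsplit : f - Q * (P : PowerSeries R) =
          (f - q (M m) * (P : PowerSeries R)) + (q (M m) - Q) * (P : PowerSeries R) := by ring
      rw [hsplit, map_add]
      apply add_mem
      · rw [hrem (M m) j hj]
        exact hMle m (hd (M m) (j - n))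
      · apply mul_mem_coeff'
        intro i
        have := hQ m i
        rw [show q (M m) - Q = -(Q - q (M m)) by ring, map_neg]
        exact neg_mem this
    have : PowerSeries.coeff (R := R) j (f - Q * (P : PowerSeries R)) ∈ ⨅ m, 𝔣 m :=
      Submodule.mem_iInf _ |>.mpr hmem
    rw [hHaus] at this
    simpa using this
  refine ⟨Q, PowerSeries.trunc n (f - Q * (P : PowerSeries R)), ?_⟩
  have : ((PowerSeries.trunc n (f - Q * (P : PowerSeries R)) : Polynomial R) : PowerSeries R) =
      f - Q * (P : PowerSeries R) := by
    ext j
    rw [Polynomial.coeff_coe, PowerSeries.coeff_trunc]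
    split_ifs with hjn
    · rfl
    · exact (hvanish j (by omega)).symm
  rw [this]; ring

end Stmt11Aux

theorem stmt_11 {R : Type*} [CommRing R] (𝔞 : Ideal R) (𝔣 : ℕ → Ideal R)
    (hdesc : ∀ i, 𝔣 (i + 1) ≤ 𝔣 i)
    (hfa : ∀ i, ∃ m : ℕ, 𝔞 ^ m ≤ 𝔣 i)
    (hHaus : (⨅ i, 𝔣 i) = ⊥)
    (hcomplete : ∀ a : ℕ → R, (∀ i j, i ≤ j → a j - a i ∈ 𝔣 i) →
      ∃ b : R, ∀ i, b - a i ∈ 𝔣 i)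
    (P : Polynomial R) (hP : P.Monic) (hPW : ∀ i < P.natDegree, P.coeff i ∈ 𝔞) :
    Function.Surjective
      ((Ideal.Quotient.mk (Ideal.span {(P : PowerSeries R)})).comp
        (Polynomial.coeToPowerSeries.ringHom)) ∧
    RingHom.ker ((Ideal.Quotient.mk (Ideal.span {(P : PowerSeries R)})).comp
        (Polynomial.coeToPowerSeries.ringHom)) = Ideal.span {P} := by
  constructor
  · intro y
    obtain ⟨f, rfl⟩ := Ideal.Quotient.mk_surjective y
    obtain ⟨Q, r, hfr⟩ := Stmt11Aux.exists_div 𝔞 𝔣 hfa hHaus hcomplete P hP hPW f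
    refine ⟨r, ?_⟩
    rw [RingHom.comp_apply]
    rw [Ideal.Quotient.mk_eq_mk_iff_sub_mem]
    rw [Ideal.mem_span_singleton]
    refine ⟨-Q, ?_⟩
    have : (Polynomial.coeToPowerSeries.ringHom r : PowerSeries R) = (r : PowerSeries R) := rfl
    rw [this, hfr]; ring
  · ext x
    rw [RingHom.mem_ker, RingHom.comp_apply, Ideal.Quotient.eq_zero_iff_mem,
      Ideal.mem_span_singleton, Ideal.mem_span_singleton]
    have hcoe : (Polynomial.coeToPowerSeries.ringHom x : PowerSeries R) = (x : PowerSeries R) := rfl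
    rw [hcoe]
    constructor
    · rintro ⟨c, hc⟩
      rcases subsingleton_or_nontrivial R with hR | hR
      · exact ⟨0, Subsingleton.elim _ _⟩
      rw [← Polynomial.modByMonic_eq_zero_iff_dvd hP]
      have hdiv := Polynomial.modByMonic_add_div x P
      have h1 : ((x %ₘ P : Polynomial R) : PowerSeries R) +
          (P : PowerSeries R) * ((x /ₘ P : Polynomial R) : PowerSeries R) = (x : PowerSeries R) := by
        rw [← Polynomial.coe_mul, ← Polynomial.coe_add, hdiv]
      have hmod : ((x %ₘ P : Polynomial R) : PowerSeries R) =
          (c - ((x /ₘ P : Polynomial R) : PowerSeries R)) * (P : PowerSeries R) := by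
        linear_combination h1 + hc
      have hker : (c - ((x /ₘ P : Polynomial R) : PowerSeries R)) = 0 := by
        apply Stmt11Aux.eq_zero_of_mul 𝔞 𝔣 hfa hHaus P hP hPW
        intro j hj
        rw [← hmod, Polynomial.coeff_coe]
        apply Polynomial.coeff_eq_zero_of_degree_lt
        calc (x %ₘ P).degree < P.degree := Polynomial.degree_modByMonic_lt x hP
          _ = (P.natDegree : WithBot ℕ) := Polynomial.degree_eq_natDegree hP.ne_zero
          _ ≤ (j : WithBot ℕ) := by exact_mod_cast Nat.cast_le.mpr hj
      have : ((x %ₘ P : Polynomial R) : PowerSeries R) = 0 := by rw [hmod, hker, zero_mul]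
      exact Polynomial.coe_eq_zero_iff.mp this
    · rintro ⟨c, hc⟩
      exact ⟨(c : PowerSeries R), by rw [hc, Polynomial.coe_mul]⟩
end

section
/- Let R be a PID and f ∈ R[[X]] with f₀ ≠ 0. If f₀ is associate to πᵏ for some prime π of R and f = π·f′ with f′ ∈ R[[X]], π ∤ f′, k = 1, and f′₀ a unit in R, then f is irreducible in R[[X]]. -/
theorem stmt_18 {R : Type*} [CommRing R] [IsDomain R] [IsPrincipalIdealRing R]
    (f f' : PowerSeries R) (π : R) (hπ : Prime π)
    (hf0 : PowerSeries.constantCoeff f ≠ 0)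
    (hassoc : Associated (π ^ 1) (PowerSeries.constantCoeff f))
    (hff' : f = PowerSeries.C π * f')
    (hndvd : ¬(PowerSeries.C π ∣ f'))
    (hunit : IsUnit (PowerSeries.constantCoeff f')) :
    Irreducible f := by
  have hCirr : Irreducible (PowerSeries.C π) := by
    constructor
    · intro h
      exact hπ.not_unit (by simpa using (PowerSeries.isUnit_iff_constantCoeff.mp h))
    · intro a b hab
      have h0 : π = PowerSeries.constantCoeff a * PowerSeries.constantCoeff b := by
        have := congrArg (PowerSeries.constantCoeff) hab
        simpa using this
      rcases hπ.irreducible.isUnit_or_isUnit h0 with h | h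
      · exact Or.inl (PowerSeries.isUnit_iff_constantCoeff.mpr h)
      · exact Or.inr (PowerSeries.isUnit_iff_constantCoeff.mpr h)
  have hf'u : IsUnit f' := PowerSeries.isUnit_iff_constantCoeff.mpr hunit
  have : Associated (PowerSeries.C π) f := ⟨hf'u.unit, by rw [hff']; simp⟩
  exact this.irreducible hCirr
end

section
/- Let R be an integral domain, 𝔭 a prime ideal of R such that the 𝔭-adic completion R̂ of R is an integral domain containing R, and let f ∈ R[[X]] be a power series whose image in R̂[[X]] is 𝔭̂-distinguished, where 𝔭̂ = 𝔭R̂. If every nonunit divisor of f₀ in R is a nonunit in R̂, and the Weierstrass polynomial P_f associated to f in R̂[X] is irreducible in R̂[X], then f is irreducible in R[[X]]. -/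
open PowerSeries

namespace Stmt19

variable {B : Type*} [CommRing B]

lemma coeff_mul_mem_right (K : Ideal B) {F : B⟦X⟧} (G : B⟦X⟧)
    (hF : ∀ d, coeff d F ∈ K) (d : ℕ) : coeff d (G * F) ∈ K := by
  rw [coeff_mul]
  exact Ideal.sum_mem K fun p _ => K.mul_mem_left _ (hF p.2)

lemma coeff_mul_mem_mul (M K : Ideal B) {F G : B⟦X⟧} (hG : ∀ d, coeff d G ∈ M)
    (hF : ∀ d, coeff d F ∈ K) (d : ℕ) : coeff d (G * F) ∈ M * K := by
  rw [coeff_mul]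
  exact Ideal.sum_mem _ fun p _ => Ideal.mul_mem_mul (hG p.1) (hF p.2)

lemma wdiv_unique (N : Ideal B) (hh : ∀ x : B, (∀ t : ℕ, x ∈ N ^ t) → x = 0)
    {n : ℕ} {Q q r : B⟦X⟧}
    (hQ1 : coeff n Q = 1) (hQhi : ∀ d, n < d → coeff d Q = 0)
    (hQlo : ∀ d < n, coeff d Q ∈ N)
    (hrhi : ∀ d, n ≤ d → coeff d r = 0)
    (h : q * Q + r = 0) : q = 0 ∧ r = 0 := by
  set E : B⟦X⟧ := Q - X ^ n with hE
  have hEmem : ∀ d, coeff d E ∈ N := by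
    intro d
    rcases lt_trichotomy d n with hd | rfl | hd
    · simpa [hE, coeff_X_pow, hd.ne] using hQlo d hd
    · simp [hE, coeff_X_pow, hQ1]
    · simp [hE, coeff_X_pow, hQhi d hd, hd.ne']
  have h' : q * X ^ n + (q * E + r) = 0 := by
    rw [hE]; rw [← h]; ring
  have key : ∀ t : ℕ, (∀ d, coeff d q ∈ N ^ t) ∧ (∀ d, coeff d r ∈ N ^ t) := by
    intro t
    induction t with
    | zero => simp [Ideal.one_eq_top]
    | succ t ih =>
      have hqE : ∀ d, coeff d (q * E) ∈ N ^ (t + 1) := by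
        intro d
        rw [pow_succ]
        exact coeff_mul_mem_mul _ _ ih.1 hEmem d
      constructor
      · intro d
        have h0 := congrArg (coeff (d + n)) h'
        rw [map_add, map_add, coeff_mul_X_pow, hrhi (d + n) (Nat.le_add_left n d),
          map_zero, add_zero] at h0
        rw [eq_neg_of_add_eq_zero_left h0]
        exact neg_mem (hqE _)
      · intro d
        rcases le_or_gt n d with hd | hd
        · rw [hrhi d hd]; exact zero_mem _
        · have h0 := congrArg (coeff d) h'
          rw [map_add, map_add, coeff_mul_X_pow', if_neg (by omega), map_zero, zero_add] at h0
          rw [eq_neg_of_add_eq_zero_right h0]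
          exact neg_mem (hqE _)
  constructor
  · ext d; rw [map_zero]; exact hh _ fun t => (key t).1 d
  · ext d; rw [map_zero]; exact hh _ fun t => (key t).2 d

lemma wprep_unique (N : Ideal B) (hh : ∀ x : B, (∀ t : ℕ, x ∈ N ^ t) → x = 0)
    {j : ℕ} {u₁ u₂ p₁ p₂ : B⟦X⟧} (hu₂ : IsUnit u₂)
    (h11 : coeff j p₁ = 1) (h1hi : ∀ d, j < d → coeff d p₁ = 0)
    (h1lo : ∀ d < j, coeff d p₁ ∈ N)
    (h21 : coeff j p₂ = 1) (h2hi : ∀ d, j < d → coeff d p₂ = 0)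
    (heq : u₁ * p₁ = u₂ * p₂) : u₁ = u₂ ∧ p₁ = p₂ := by
  obtain ⟨v, rfl⟩ := hu₂
  set w : B⟦X⟧ := (↑v⁻¹ : B⟦X⟧) * u₁ with hw
  have hwp : w * p₁ = p₂ := by
    rw [hw, mul_assoc, heq, ← mul_assoc, ← Units.val_mul, inv_mul_cancel, Units.val_one, one_mul]
  have h0 : (w - 1) * p₁ + (p₁ - p₂) = 0 := by rw [← hwp]; ring
  have hr : ∀ d, j ≤ d → coeff d (p₁ - p₂) = 0 := by
    intro d hd
    rcases eq_or_lt_of_le hd with rfl | hd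
    · simp [h11, h21]
    · simp [h1hi d hd, h2hi d hd]
  obtain ⟨hq0, hr0⟩ := wdiv_unique N hh h11 h1hi h1lo hr h0
  have hw1 : w = 1 := by rwa [sub_eq_zero] at hq0
  constructor
  · have h2 : (↑v : B⟦X⟧) * w = ↑v * 1 := by rw [hw1]
    rw [hw, ← mul_assoc, ← Units.val_mul, mul_inv_cancel, Units.val_one, one_mul, mul_one] at h2
    exact h2
  · rwa [sub_eq_zero] at hr0

lemma wprep_exists (N : Ideal B) {m : ℕ} (hN : N ^ m = ⊥)
    {g : B⟦X⟧} {j : ℕ} (hlo : ∀ i < j, coeff i g ∈ N) (hu : IsUnit (coeff j g)) :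
    ∃ u p : B⟦X⟧, IsUnit u ∧ coeff j p = 1 ∧ (∀ d, j < d → coeff d p = 0) ∧
      (∀ d < j, coeff d p ∈ N) ∧ g = u * p := by
  classical
  set s : B⟦X⟧ → B⟦X⟧ := fun F => PowerSeries.mk fun i => coeff (i + j) F with hs
  have hs_coeff : ∀ F d, coeff d (s F) = coeff (d + j) F := by
    intro F d; rw [hs]; exact coeff_mk _ _
  have hs_sub : ∀ F G, s (F - G) = s F - s G := by
    intro F G; ext d; rw [map_sub, hs_coeff, hs_coeff, hs_coeff, map_sub]
  have hs_add : ∀ F G, s (F + G) = s F + s G := by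
    intro F G; ext d; rw [map_add, hs_coeff, hs_coeff, hs_coeff, map_add]
  have hs_mulX : ∀ F, s (F * X ^ j) = F := by
    intro F; ext d; rw [hs_coeff, coeff_mul_X_pow]
  have hs_mem : ∀ (K : Ideal B) F, (∀ d, coeff d F ∈ K) → ∀ d, coeff d (s F) ∈ K := by
    intro K F hF d; rw [hs_coeff]; exact hF _
  set b : B⟦X⟧ := s g with hb
  have hbu : IsUnit b := by
    rw [isUnit_iff_constantCoeff, ← coeff_zero_eq_constantCoeff_apply, hb, hs_coeff, zero_add]
    exact hu
  set a : B⟦X⟧ := g - b * X ^ j with ha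
  have hag : g = a + b * X ^ j := by rw [ha]; ring
  have hamem : ∀ d, coeff d a ∈ N := by
    intro d
    rcases lt_or_ge d j with hd | hd
    · rw [ha, map_sub, coeff_mul_X_pow', if_neg (by omega), sub_zero]
      exact hlo d hd
    · have : coeff d (b * X ^ j) = coeff d g := by
        rw [coeff_mul_X_pow', if_pos hd, hb, hs_coeff, Nat.sub_add_cancel hd]
      rw [ha, map_sub, this, sub_self]
      exact zero_mem _
  obtain ⟨bv, hbv⟩ := hbu
  set T : B⟦X⟧ → B⟦X⟧ := fun q => (↑bv⁻¹ : B⟦X⟧) * (1 - s (q * a)) with hT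
  have hTdiff : ∀ (K : Ideal B) q q', (∀ d, coeff d (q - q') ∈ K) →
      ∀ d, coeff d (T q - T q') ∈ K * N := by
    intro K q q' hqq d
    have e1 : T q - T q' = (↑bv⁻¹ : B⟦X⟧) * s ((q' - q) * a) := by
      rw [hT]
      show (↑bv⁻¹ : B⟦X⟧) * (1 - s (q * a)) - (↑bv⁻¹ : B⟦X⟧) * (1 - s (q' * a)) = _
      rw [show (q' - q) * a = q' * a - q * a by ring, hs_sub]
      ring
    rw [e1]
    refine coeff_mul_mem_right _ _ (hs_mem _ _ ?_) d
    refine coeff_mul_mem_mul K N ?_ hamem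
    intro e
    have : coeff e (q' - q) = -(coeff e (q - q')) := by rw [← map_neg, neg_sub]
    rw [this]
    exact neg_mem (hqq e)
  set qs : ℕ → B⟦X⟧ := fun t => T^[t] 0 with hqs
  have hstep : ∀ t d, coeff d (qs (t + 1) - qs t) ∈ N ^ t := by
    intro t
    induction t with
    | zero => intro d; simp [Ideal.one_eq_top]
    | succ t ih =>
      intro d
      have e1 : qs (t + 2) = T (qs (t + 1)) := Function.iterate_succ_apply' T (t + 1) 0
      have e2 : qs (t + 1) = T (qs t) := Function.iterate_succ_apply' T t 0
      have h3 := hTdiff (N ^ t) (qs (t + 1)) (qs t) ih d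
      rw [← e2, ← e1] at h3
      rwa [pow_succ]
  have hfix : T (qs m) = qs m := by
    have h1 : qs (m + 1) - qs m = 0 := by
      ext d
      rw [map_zero]
      have := hstep m d
      rwa [hN, Ideal.mem_bot] at this
    have h2 : qs (m + 1) = qs m := by rwa [sub_eq_zero] at h1
    calc T (qs m) = qs (m + 1) := (Function.iterate_succ_apply' T m 0).symm
      _ = qs m := h2
  set q : B⟦X⟧ := qs m with hq
  have heq : b * q + s (q * a) = 1 := by
    have h2 : b * q = 1 - s (q * a) := by
      conv_lhs => rw [← hfix]
      rw [hT]
      show b * ((↑bv⁻¹ : B⟦X⟧) * (1 - s (q * a))) = _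
      rw [← mul_assoc, ← hbv, ← Units.val_mul, mul_inv_cancel, Units.val_one, one_mul]
    rw [h2]; ring
  set p : B⟦X⟧ := q * g with hp
  have hsp : s p = 1 := by
    rw [hp, hag, mul_add, ← mul_assoc, hs_add, hs_mulX]
    rw [show q * b = b * q by ring, ← heq]
    ring
  have hp1 : coeff j p = 1 := by
    have := hs_coeff p 0
    rw [hsp, zero_add] at this
    simpa using this.symm
  have hphi : ∀ d, j < d → coeff d p = 0 := by
    intro d hd
    have h1 : coeff (d - j) (s p) = coeff d p := by
      rw [hs_coeff, Nat.sub_add_cancel hd.le]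
    rw [hsp] at h1
    rw [← h1, coeff_one, if_neg (by omega)]
  have hplo : ∀ d < j, coeff d p ∈ N := by
    intro d hd
    have e1 : p = q * a + (q * b) * X ^ j := by rw [hp, hag]; ring
    rw [e1, map_add, coeff_mul_X_pow', if_neg (by omega), add_zero]
    exact coeff_mul_mem_right _ _ hamem d
  have hqu : IsUnit q := by
    rw [isUnit_iff_constantCoeff]
    have h0 := congrArg (constantCoeff) heq
    rw [map_add, map_mul, map_one] at h0
    have hν : constantCoeff (s (q * a)) ∈ N := by
      rw [← coeff_zero_eq_constantCoeff_apply]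
      exact hs_mem N _ (coeff_mul_mem_right _ _ hamem) 0
    have hnil : IsNilpotent (constantCoeff (s (q * a))) := by
      refine ⟨m, ?_⟩
      have : (constantCoeff (s (q * a))) ^ m ∈ N ^ m := Ideal.pow_mem_pow hν m
      rwa [hN, Ideal.mem_bot] at this
    have h1 : constantCoeff b * constantCoeff q = 1 - constantCoeff (s (q * a)) := by
      rw [← h0]; ring
    have : IsUnit (constantCoeff b * constantCoeff q) := h1 ▸ hnil.isUnit_one_sub
    exact isUnit_of_mul_isUnit_right this
  obtain ⟨qv, hqv⟩ := hqu
  refine ⟨(↑qv⁻¹ : B⟦X⟧), p, (qv⁻¹).isUnit, hp1, hphi, hplo, ?_⟩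
  rw [hp, ← hqv, ← mul_assoc, ← Units.val_mul, inv_mul_cancel, Units.val_one, one_mul]

lemma wseries_mul (N : Ideal B) {j k : ℕ} {p q : B⟦X⟧}
    (hp1 : coeff j p = 1) (hphi : ∀ d, j < d → coeff d p = 0)
    (hplo : ∀ d < j, coeff d p ∈ N)
    (hq1 : coeff k q = 1) (hqhi : ∀ d, k < d → coeff d q = 0)
    (hqlo : ∀ d < k, coeff d q ∈ N) :
    coeff (j + k) (p * q) = 1 ∧ (∀ d, j + k < d → coeff d (p * q) = 0) ∧
      (∀ d < j + k, coeff d (p * q) ∈ N) := by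
  refine ⟨?_, ?_, ?_⟩
  · rw [coeff_mul, Finset.sum_eq_single (j, k)]
    · rw [hp1, hq1, one_mul]
    · rintro ⟨i, l⟩ hmem hne
      rw [Finset.HasAntidiagonal.mem_antidiagonal] at hmem
      have hij : i ≠ j := by
        rintro rfl
        have : l = k := by omega
        rw [this] at hne
        exact hne rfl
      rcases hij.lt_or_gt with hi | hi
      · have hl : k < l := by omega
        rw [hqhi l hl, mul_zero]
      · rw [hphi i hi, zero_mul]
    · intro hmem
      exact absurd (Finset.HasAntidiagonal.mem_antidiagonal.mpr (show (j, k).1 + (j, k).2 = j + k from rfl)) hmem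
  · intro d hd
    rw [coeff_mul]
    refine Finset.sum_eq_zero ?_
    rintro ⟨i, l⟩ hmem
    rw [Finset.HasAntidiagonal.mem_antidiagonal] at hmem
    rcases le_or_gt i j with hi | hi
    · have : k < l := by omega
      rw [hqhi l this, mul_zero]
    · rw [hphi i hi, zero_mul]
  · intro d hd
    rw [coeff_mul]
    refine Ideal.sum_mem _ ?_
    rintro ⟨i, l⟩ hmem
    rw [Finset.HasAntidiagonal.mem_antidiagonal] at hmem
    rcases lt_trichotomy i j with hi | rfl | hi
    · exact N.mul_mem_right _ (hplo i hi)
    · have : l < k := by omega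
      exact N.mul_mem_left _ (hqlo l this)
    · rw [hphi i hi, zero_mul]
      exact zero_mem _

section Glue

variable {R : Type*} [CommRing R] (𝔭 : Ideal R)

/-- evaluation to level `m` as a ring hom -/
noncomputable def Ev (m : ℕ) : AdicCompletion 𝔭 R →+* R ⧸ 𝔭 ^ m :=
  (AdicCompletion.evalₐ 𝔭 m).toRingHom

lemma pow_smul_top_eq (m : ℕ) : (𝔭 ^ m • ⊤ : Ideal R) = 𝔭 ^ m := by ext x; simp

lemma Ev_apply (m : ℕ) (x : AdicCompletion 𝔭 R) :
    Ev 𝔭 m x = Ideal.quotientEquivAlgOfEq R (pow_smul_top_eq 𝔭 m) (x.val m) := rfl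

lemma Ev_inj {x y : AdicCompletion 𝔭 R} (h : ∀ m, Ev 𝔭 m x = Ev 𝔭 m y) : x = y := by
  refine AdicCompletion.ext fun m => ?_
  have hm := h m
  rw [Ev_apply, Ev_apply] at hm
  exact (Ideal.quotientEquivAlgOfEq R (pow_smul_top_eq 𝔭 m)).injective hm

lemma Ev_algebraMap (m : ℕ) (r : R) :
    Ev 𝔭 m (algebraMap R (AdicCompletion 𝔭 R) r) = Ideal.Quotient.mk (𝔭 ^ m) r := by
  have := (AdicCompletion.evalₐ 𝔭 m).commutes r
  rw [Ideal.Quotient.algebraMap_eq] at this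
  exact this

lemma factor_trans (c : ∀ m, R ⧸ 𝔭 ^ m)
    (hc : ∀ m, Ideal.Quotient.factor (Ideal.pow_le_pow_right (Nat.le_succ m)) (c (m + 1)) = c m) :
    ∀ {m n : ℕ} (hmn : m ≤ n),
      Ideal.Quotient.factor (Ideal.pow_le_pow_right hmn) (c n) = c m := by
  intro m n hmn
  induction n with
  | zero =>
    obtain rfl : m = 0 := Nat.le_zero.mp hmn
    obtain ⟨y, hy⟩ := Ideal.Quotient.mk_surjective (c 0)
    rw [← hy, Ideal.Quotient.factor_mk]
  | succ n ih =>
    rcases Nat.lt_or_ge m (n + 1) with hlt | hge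
    · have hmn' : m ≤ n := Nat.lt_succ_iff.mp hlt
      obtain ⟨y, hy⟩ := Ideal.Quotient.mk_surjective (c (n + 1))
      have h1 : c n = Ideal.Quotient.mk (𝔭 ^ n) y := by
        rw [← hc n, ← hy, Ideal.Quotient.factor_mk]
      rw [← ih hmn', h1, ← hy, Ideal.Quotient.factor_mk, Ideal.Quotient.factor_mk]
    · obtain rfl : m = n + 1 := le_antisymm hmn hge
      obtain ⟨y, hy⟩ := Ideal.Quotient.mk_surjective (c (n + 1))
      rw [← hy, Ideal.Quotient.factor_mk]

/-- glue a compatible family of residues to an element of the adic completion -/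
noncomputable def glue (c : ∀ m, R ⧸ 𝔭 ^ m)
    (hc : ∀ m, Ideal.Quotient.factor (Ideal.pow_le_pow_right (Nat.le_succ m)) (c (m + 1)) = c m) :
    AdicCompletion 𝔭 R :=
  ⟨fun m => (Ideal.quotientEquivAlgOfEq R (pow_smul_top_eq 𝔭 m)).symm (c m), by
    intro m n hmn
    obtain ⟨y, hy⟩ := Ideal.Quotient.mk_surjective (c n)
    have hcm : c m = Ideal.Quotient.mk (𝔭 ^ m) y := by
      rw [← factor_trans 𝔭 c hc hmn, ← hy, Ideal.Quotient.factor_mk]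
    show (AdicCompletion.transitionMap 𝔭 R hmn)
        ((Ideal.quotientEquivAlgOfEq R (pow_smul_top_eq 𝔭 n)).symm (c n)) =
      (Ideal.quotientEquivAlgOfEq R (pow_smul_top_eq 𝔭 m)).symm (c m)
    rw [← hy, hcm, Ideal.quotientEquivAlgOfEq_symm, Ideal.quotientEquivAlgOfEq_symm,
      Ideal.quotientEquivAlgOfEq_mk, Ideal.quotientEquivAlgOfEq_mk]
    rfl⟩

lemma Ev_glue (c : ∀ m, R ⧸ 𝔭 ^ m)
    (hc : ∀ m, Ideal.Quotient.factor (Ideal.pow_le_pow_right (Nat.le_succ m)) (c (m + 1)) = c m) (m : ℕ) :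
    Ev 𝔭 m (glue 𝔭 c hc) = c m := by
  rw [Ev_apply]
  exact (Ideal.quotientEquivAlgOfEq R (pow_smul_top_eq 𝔭 m)).apply_symm_apply (c m)

/-- the image of `𝔭` at level `m` -/
noncomputable def Nm (m : ℕ) : Ideal (R ⧸ 𝔭 ^ m) := 𝔭.map (Ideal.Quotient.mk (𝔭 ^ m))

lemma Nm_pow_eq_bot (m : ℕ) : Nm 𝔭 m ^ m = ⊥ := by
  rw [Nm, ← Ideal.map_pow, Ideal.map_quotient_self]

lemma Nm_haus (m : ℕ) : ∀ x : R ⧸ 𝔭 ^ m, (∀ t : ℕ, x ∈ Nm 𝔭 m ^ t) → x = 0 := by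
  intro x hx
  have := hx m
  rwa [Nm_pow_eq_bot, Ideal.mem_bot] at this

/-- the "closure" of the image of `𝔭` in the completion -/
noncomputable def Ihat : Ideal (AdicCompletion 𝔭 R) :=
  ⨅ m, (Nm 𝔭 m).comap (Ev 𝔭 m)

lemma Ev_mem_Nm {x : AdicCompletion 𝔭 R} (hx : x ∈ Ihat 𝔭) (m : ℕ) :
    Ev 𝔭 m x ∈ Nm 𝔭 m := by
  rw [Ihat] at hx
  exact (Submodule.mem_iInf _).mp hx m

lemma I_le_Ihat : 𝔭.map (algebraMap R (AdicCompletion 𝔭 R)) ≤ Ihat 𝔭 := by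
  refine le_iInf fun m => ?_
  rw [← Ideal.map_le_iff_le_comap, Ideal.map_map]
  have : (Ev 𝔭 m).comp (algebraMap R (AdicCompletion 𝔭 R)) = Ideal.Quotient.mk (𝔭 ^ m) :=
    RingHom.ext fun r => Ev_algebraMap 𝔭 m r
  rw [this]
  exact le_rfl

lemma Ihat_haus : ∀ x : AdicCompletion 𝔭 R, (∀ t : ℕ, x ∈ Ihat 𝔭 ^ t) → x = 0 := by
  intro x hx
  refine Ev_inj 𝔭 fun m => ?_
  rw [map_zero]
  have h1 : Ev 𝔭 m x ∈ (Ihat 𝔭 ^ m).map (Ev 𝔭 m) := Ideal.mem_map_of_mem _ (hx m)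
  rw [Ideal.map_pow] at h1
  have h2 : (Ihat 𝔭).map (Ev 𝔭 m) ≤ Nm 𝔭 m := by
    rw [Ideal.map_le_iff_le_comap]
    exact iInf_le _ m
  have h3 := (Ideal.pow_right_mono h2 m) h1
  rwa [Nm_pow_eq_bot, Ideal.mem_bot] at h3

lemma Ev_one_eq_zero {x : AdicCompletion 𝔭 R}
    (hx : x ∈ 𝔭.map (algebraMap R (AdicCompletion 𝔭 R))) : Ev 𝔭 1 x = 0 := by
  have h1 : Ev 𝔭 1 x ∈ (𝔭.map (algebraMap R (AdicCompletion 𝔭 R))).map (Ev 𝔭 1) :=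
    Ideal.mem_map_of_mem _ hx
  rw [Ideal.map_map] at h1
  have he : (Ev 𝔭 1).comp (algebraMap R (AdicCompletion 𝔭 R)) = Ideal.Quotient.mk (𝔭 ^ 1) :=
    RingHom.ext fun r => Ev_algebraMap 𝔭 1 r
  rw [he] at h1
  have h2 : 𝔭.map (Ideal.Quotient.mk (𝔭 ^ 1)) ≤ ⊥ := by
    rw [← Ideal.map_quotient_self (𝔭 ^ 1)]
    exact Ideal.map_mono (le_of_eq (pow_one 𝔭).symm)
  exact Ideal.mem_bot.mp (h2 h1)

lemma mem_p_of_mem_I {x : R}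
    (hx : algebraMap R (AdicCompletion 𝔭 R) x ∈ 𝔭.map (algebraMap R (AdicCompletion 𝔭 R))) :
    x ∈ 𝔭 := by
  have h1 : Ev 𝔭 1 (algebraMap R (AdicCompletion 𝔭 R) x) ∈
      (𝔭.map (algebraMap R (AdicCompletion 𝔭 R))).map (Ev 𝔭 1) := Ideal.mem_map_of_mem _ hx
  rw [Ideal.map_map] at h1
  have he : (Ev 𝔭 1).comp (algebraMap R (AdicCompletion 𝔭 R)) = Ideal.Quotient.mk (𝔭 ^ 1) :=
    RingHom.ext fun r => Ev_algebraMap 𝔭 1 r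
  rw [he] at h1
  have h2 : 𝔭.map (Ideal.Quotient.mk (𝔭 ^ 1)) ≤ ⊥ := by
    rw [← Ideal.map_quotient_self (𝔭 ^ 1)]
    exact Ideal.map_mono (le_of_eq (pow_one 𝔭).symm)
  rw [Ev_algebraMap] at h1
  have h1 := Ideal.mem_bot.mp (h2 h1)
  rw [← pow_one 𝔭]
  exact (Ideal.Quotient.eq_zero_iff_mem).mp h1

lemma glue_prep (g : PowerSeries R) (j : ℕ)
    (hlo : ∀ i < j, coeff i g ∈ 𝔭) (y : R) (hy : coeff j g * y - 1 ∈ 𝔭) :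
    ∃ u p : (AdicCompletion 𝔭 R)⟦X⟧, IsUnit u ∧ coeff j p = 1 ∧
      (∀ d, j < d → coeff d p = 0) ∧ (∀ d < j, coeff d p ∈ Ihat 𝔭) ∧
      PowerSeries.map (algebraMap R (AdicCompletion 𝔭 R)) g = u * p := by
  classical
  have hex : ∀ m, ∃ u p : (R ⧸ 𝔭 ^ m)⟦X⟧, IsUnit u ∧ coeff j p = 1 ∧
      (∀ d, j < d → coeff d p = 0) ∧ (∀ d < j, coeff d p ∈ Nm 𝔭 m) ∧
      PowerSeries.map (Ideal.Quotient.mk (𝔭 ^ m)) g = u * p := by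
    intro m
    refine wprep_exists (Nm 𝔭 m) (Nm_pow_eq_bot 𝔭 m) ?_ ?_
    · intro i hi
      rw [coeff_map]
      exact Ideal.mem_map_of_mem _ (hlo i hi)
    · rw [coeff_map]
      have h1 : Ideal.Quotient.mk (𝔭 ^ m) (coeff j g) * Ideal.Quotient.mk (𝔭 ^ m) y
          = 1 + Ideal.Quotient.mk (𝔭 ^ m) (coeff j g * y - 1) := by
        rw [← map_mul, show (1 : R ⧸ 𝔭 ^ m) = Ideal.Quotient.mk (𝔭 ^ m) 1 from (map_one _).symm,
          ← map_add]
        congr 1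
        ring
      have hν : Ideal.Quotient.mk (𝔭 ^ m) (coeff j g * y - 1) ∈ Nm 𝔭 m :=
        Ideal.mem_map_of_mem _ hy
      have hnil : IsNilpotent (Ideal.Quotient.mk (𝔭 ^ m) (coeff j g * y - 1)) := by
        refine ⟨m, ?_⟩
        have := Ideal.pow_mem_pow hν m
        rwa [Nm_pow_eq_bot, Ideal.mem_bot] at this
      have : IsUnit (Ideal.Quotient.mk (𝔭 ^ m) (coeff j g) * Ideal.Quotient.mk (𝔭 ^ m) y) := by
        rw [h1]
        exact hnil.isUnit_one_add
      exact isUnit_of_mul_isUnit_left this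
  choose u_ p_ hu_ hp1_ hphi_ hplo_ hgup_ using hex
  set φ : ∀ m, R ⧸ 𝔭 ^ (m + 1) →+* R ⧸ 𝔭 ^ m := fun m =>
    Ideal.Quotient.factor (Ideal.pow_le_pow_right (Nat.le_succ m)) with hφ
  have hcomp : ∀ m (F : PowerSeries R),
      PowerSeries.map (φ m) (PowerSeries.map (Ideal.Quotient.mk (𝔭 ^ (m + 1))) F) =
      PowerSeries.map (Ideal.Quotient.mk (𝔭 ^ m)) F := by
    intro m F
    ext d
    rw [coeff_map, coeff_map, coeff_map, hφ, Ideal.Quotient.factor_mk]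
  have hNmap : ∀ m {z : R ⧸ 𝔭 ^ (m + 1)}, z ∈ Nm 𝔭 (m + 1) → φ m z ∈ Nm 𝔭 m := by
    intro m z hz
    have h1 : φ m z ∈ (Nm 𝔭 (m + 1)).map (φ m) := Ideal.mem_map_of_mem _ hz
    rw [Nm, Ideal.map_map, hφ, Ideal.Quotient.factor_comp_mk] at h1
    exact h1
  have hcompat : ∀ m, PowerSeries.map (φ m) (u_ (m + 1)) = u_ m ∧
      PowerSeries.map (φ m) (p_ (m + 1)) = p_ m := by
    intro m
    refine wprep_unique (Nm 𝔭 m) (Nm_haus 𝔭 m) (hu_ m) ?_ ?_ ?_ (hp1_ m) (hphi_ m) ?_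
    · rw [coeff_map, hp1_, map_one]
    · intro d hd
      rw [coeff_map, hphi_ (m + 1) d hd, map_zero]
    · intro d hd
      rw [coeff_map]
      exact hNmap m (hplo_ (m + 1) d hd)
    · rw [← map_mul, ← hgup_ (m + 1), hcomp, hgup_ m]
  set w_ : ∀ m, (R ⧸ 𝔭 ^ m)⟦X⟧ := fun m => ↑(hu_ m).unit⁻¹ with hw
  have hw_mul : ∀ m, u_ m * w_ m = 1 := fun m => by
    rw [hw]
    conv_lhs => rw [← (hu_ m).unit_spec]
    rw [← Units.val_mul, mul_inv_cancel, Units.val_one]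
  have hwcompat : ∀ m, PowerSeries.map (φ m) (w_ (m + 1)) = w_ m := by
    intro m
    have h1 : PowerSeries.map (φ m) (w_ (m + 1)) * u_ m = 1 := by
      rw [← (hcompat m).1, ← map_mul, mul_comm (w_ (m + 1)), hw_mul, map_one]
    calc PowerSeries.map (φ m) (w_ (m + 1))
        = PowerSeries.map (φ m) (w_ (m + 1)) * (u_ m * w_ m) := by rw [hw_mul, mul_one]
      _ = (PowerSeries.map (φ m) (w_ (m + 1)) * u_ m) * w_ m := by ring
      _ = w_ m := by rw [h1, one_mul]
  have compat_coeff : ∀ (F_ : ∀ m, (R ⧸ 𝔭 ^ m)⟦X⟧),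
      (∀ m, PowerSeries.map (φ m) (F_ (m + 1)) = F_ m) → ∀ d m,
      Ideal.Quotient.factor (Ideal.pow_le_pow_right (Nat.le_succ m))
        (coeff d (F_ (m + 1))) = coeff d (F_ m) := by
    intro F_ hF d m
    conv_rhs => rw [← hF m]
    rw [coeff_map, hφ]
  set U : (AdicCompletion 𝔭 R)⟦X⟧ := PowerSeries.mk fun d =>
    glue 𝔭 (fun m => coeff d (u_ m)) (compat_coeff u_ (fun m => (hcompat m).1) d) with hU
  set V : (AdicCompletion 𝔭 R)⟦X⟧ := PowerSeries.mk fun d =>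
    glue 𝔭 (fun m => coeff d (w_ m)) (compat_coeff w_ hwcompat d) with hV
  set Pp : (AdicCompletion 𝔭 R)⟦X⟧ := PowerSeries.mk fun d =>
    glue 𝔭 (fun m => coeff d (p_ m)) (compat_coeff p_ (fun m => (hcompat m).2) d) with hPp
  have hUc : ∀ d m, Ev 𝔭 m (coeff d U) = coeff d (u_ m) := by
    intro d m; rw [hU, coeff_mk]; exact Ev_glue 𝔭 _ _ m
  have hVc : ∀ d m, Ev 𝔭 m (coeff d V) = coeff d (w_ m) := by
    intro d m; rw [hV, coeff_mk]; exact Ev_glue 𝔭 _ _ m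
  have hPc : ∀ d m, Ev 𝔭 m (coeff d Pp) = coeff d (p_ m) := by
    intro d m; rw [hPp, coeff_mk]; exact Ev_glue 𝔭 _ _ m
  have key_mul : ∀ m (F G : (AdicCompletion 𝔭 R)⟦X⟧) (F' G' : (R ⧸ 𝔭 ^ m)⟦X⟧),
      (∀ d, Ev 𝔭 m (coeff d F) = coeff d F') →
      (∀ d, Ev 𝔭 m (coeff d G) = coeff d G') →
      ∀ d, Ev 𝔭 m (coeff d (F * G)) = coeff d (F' * G') := by
    intro m F G F' G' hF hG d
    rw [coeff_mul, coeff_mul, map_sum]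
    exact Finset.sum_congr rfl fun q _ => by rw [map_mul, hF, hG]
  have hUV : U * V = 1 := by
    refine PowerSeries.ext fun d => ?_
    refine Ev_inj 𝔭 fun m => ?_
    rw [key_mul m U V (u_ m) (w_ m) (fun d => hUc d m) (fun d => hVc d m) d, hw_mul m]
    rw [coeff_one, coeff_one, apply_ite (Ev 𝔭 m), map_one, map_zero]
  refine ⟨U, Pp, IsUnit.of_mul_eq_one _ hUV, ?_, ?_, ?_, ?_⟩
  · refine Ev_inj 𝔭 fun m => ?_
    rw [hPc j m, hp1_ m, map_one]
  · intro d hd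
    refine Ev_inj 𝔭 fun m => ?_
    rw [hPc d m, hphi_ m d hd, map_zero]
  · intro d hd
    rw [Ihat]
    refine (Submodule.mem_iInf _).mpr fun m => ?_
    show Ev 𝔭 m (coeff d Pp) ∈ Nm 𝔭 m
    rw [hPc d m]
    exact hplo_ m d hd
  · refine PowerSeries.ext fun d => ?_
    refine Ev_inj 𝔭 fun m => ?_
    rw [key_mul m U Pp (u_ m) (p_ m) (fun d => hUc d m) (fun d => hPc d m) d,
      coeff_map, Ev_algebraMap, ← hgup_ m, coeff_map]

end Glue

end Stmt19



open Stmt19 PowerSeries in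
theorem stmt_19 {R : Type*} [CommRing R] [IsDomain R] (𝔭 : Ideal R) (h𝔭 : 𝔭.IsPrime)
    [IsDomain (AdicCompletion 𝔭 R)]
    (hinj : Function.Injective (algebraMap R (AdicCompletion 𝔭 R)))
    (f : PowerSeries R) (n : ℕ)
    (hunit : IsUnit (Ideal.Quotient.mk (𝔭.map (algebraMap R (AdicCompletion 𝔭 R)))
      (PowerSeries.coeff n
        (PowerSeries.map (algebraMap R (AdicCompletion 𝔭 R)) f))))
    (hlow : ∀ i < n, PowerSeries.coeff i
        (PowerSeries.map (algebraMap R (AdicCompletion 𝔭 R)) f) ∈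
      𝔭.map (algebraMap R (AdicCompletion 𝔭 R)))
    (hdiv : ∀ d : R, d ∣ PowerSeries.constantCoeff f → ¬IsUnit d →
      ¬IsUnit (algebraMap R (AdicCompletion 𝔭 R) d))
    (P : Polynomial (AdicCompletion 𝔭 R)) (U : PowerSeries (AdicCompletion 𝔭 R))
    (hPmonic : P.Monic) (hPdeg : P.natDegree = n)
    (hPW : ∀ i < n, P.coeff i ∈ 𝔭.map (algebraMap R (AdicCompletion 𝔭 R)))
    (hU : IsUnit U)
    (hfact : PowerSeries.map (algebraMap R (AdicCompletion 𝔭 R)) f =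
      U * (P : PowerSeries (AdicCompletion 𝔭 R)))
    (hPirr : Irreducible P) :
    Irreducible f := by
  classical
  haveI := h𝔭
  have hn : n ≠ 0 := by
    rintro rfl
    refine hPirr.not_isUnit ?_
    rw [hPmonic.natDegree_eq_zero.mp hPdeg]
    exact isUnit_one
  have hfcoef : ∀ i < n, coeff i f ∈ 𝔭 := by
    intro i hi
    refine mem_p_of_mem_I 𝔭 ?_
    have := hlow i hi
    rwa [coeff_map] at this
  have hfn : ∃ y : R, coeff n f * y - 1 ∈ 𝔭 := by
    obtain ⟨c, hc⟩ := isUnit_iff_exists_inv.mp hunit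
    obtain ⟨y', hy'⟩ := Ideal.Quotient.mk_surjective c
    rw [← hy', ← map_mul] at hc
    have hmem : coeff n (PowerSeries.map (algebraMap R (AdicCompletion 𝔭 R)) f) * y' - 1 ∈
        𝔭.map (algebraMap R (AdicCompletion 𝔭 R)) := by
      rw [show (1 : AdicCompletion 𝔭 R ⧸ 𝔭.map (algebraMap R (AdicCompletion 𝔭 R))) =
        Ideal.Quotient.mk _ 1 from (map_one _).symm] at hc
      exact Ideal.Quotient.eq.mp hc
    have h3 := Ev_one_eq_zero 𝔭 hmem
    obtain ⟨y, hyy⟩ := Ideal.Quotient.mk_surjective (Ev 𝔭 1 y')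
    refine ⟨y, ?_⟩
    rw [← pow_one 𝔭]
    refine Ideal.Quotient.eq_zero_iff_mem.mp ?_
    rw [map_sub, map_mul, map_one, hyy]
    rw [map_sub, map_mul, map_one, coeff_map, Ev_algebraMap] at h3
    exact h3
  constructor
  · intro hf
    have hf0 : coeff 0 f ∈ 𝔭 := hfcoef 0 (Nat.pos_of_ne_zero hn)
    have hf0u : IsUnit (coeff 0 f) := by
      have h1 := PowerSeries.isUnit_iff_constantCoeff.mp hf
      rwa [← coeff_zero_eq_constantCoeff_apply] at h1
    exact h𝔭.ne_top (Ideal.eq_top_of_isUnit_mem 𝔭 hf0 hf0u)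
  · intro a b hab
    by_contra hcon
    push_neg at hcon
    obtain ⟨ha, hb⟩ := hcon
    set mkp := Ideal.Quotient.mk 𝔭 with hmkp
    have hfab_t : PowerSeries.map mkp f = PowerSeries.map mkp a * PowerSeries.map mkp b := by
      rw [hab, map_mul]
    have hft_lo : ∀ i < n, coeff i (PowerSeries.map mkp f) = 0 := by
      intro i hi
      rw [coeff_map]
      exact Ideal.Quotient.eq_zero_iff_mem.mpr (hfcoef i hi)
    have hft_n : IsUnit (coeff n (PowerSeries.map mkp f)) := by
      obtain ⟨y, hy⟩ := hfn
      rw [coeff_map]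
      refine IsUnit.of_mul_eq_one (mkp y) ?_
      rw [← map_mul, show (1 : R ⧸ 𝔭) = mkp 1 from (map_one mkp).symm]
      exact Ideal.Quotient.eq.mpr (by simpa using hy)
    have hane : ∃ i, coeff i (PowerSeries.map mkp a) ≠ 0 := by
      by_contra hc2
      push_neg at hc2
      have hz : PowerSeries.map mkp a = 0 := PowerSeries.ext fun i => hc2 i
      exact hft_n.ne_zero (by rw [hfab_t, hz, zero_mul, map_zero])
    have hbne : ∃ i, coeff i (PowerSeries.map mkp b) ≠ 0 := by
      by_contra hc2
      push_neg at hc2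
      have hz : PowerSeries.map mkp b = 0 := PowerSeries.ext fun i => hc2 i
      exact hft_n.ne_zero (by rw [hfab_t, hz, mul_zero, map_zero])
    set j := Nat.find hane with hj
    set k := Nat.find hbne with hk
    have hjne : coeff j (PowerSeries.map mkp a) ≠ 0 := Nat.find_spec hane
    have hkne : coeff k (PowerSeries.map mkp b) ≠ 0 := Nat.find_spec hbne
    have hjlo : ∀ i < j, coeff i (PowerSeries.map mkp a) = 0 := fun i hi =>
      not_not.mp (Nat.find_min hane hi)
    have hklo : ∀ i < k, coeff i (PowerSeries.map mkp b) = 0 := fun i hi =>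
      not_not.mp (Nat.find_min hbne hi)
    have hmulc : coeff (j + k) (PowerSeries.map mkp a * PowerSeries.map mkp b) =
        coeff j (PowerSeries.map mkp a) * coeff k (PowerSeries.map mkp b) := by
      rw [coeff_mul, Finset.sum_eq_single (j, k)]
      · rintro ⟨i, l⟩ hmem hne
        rw [Finset.HasAntidiagonal.mem_antidiagonal] at hmem
        have hij : i ≠ j := by
          rintro rfl
          have : l = k := by omega
          rw [this] at hne
          exact hne rfl
        rcases hij.lt_or_gt with hi | hi
        · rw [hjlo i hi, zero_mul]
        · have : l < k := by omega
          rw [hklo l this, mul_zero]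
      · intro hmem
        exact absurd (Finset.HasAntidiagonal.mem_antidiagonal.mpr (show (j, k).1 + (j, k).2 = j + k from rfl)) hmem
    have hjk : j + k = n := by
      rcases lt_trichotomy (j + k) n with hlt | he | hgt
      · exfalso
        have h0 := hft_lo _ hlt
        rw [hfab_t, hmulc] at h0
        rcases mul_eq_zero.mp h0 with h | h
        · exact hjne h
        · exact hkne h
      · exact he
      · exfalso
        have h0 : coeff n (PowerSeries.map mkp f) = 0 := by
          rw [hfab_t, coeff_mul]
          refine Finset.sum_eq_zero ?_
          rintro ⟨i, l⟩ hmem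
          rw [Finset.HasAntidiagonal.mem_antidiagonal] at hmem
          rcases lt_or_ge i j with hi | hi
          · rw [hjlo i hi, zero_mul]
          · have : l < k := by omega
            rw [hklo l this, mul_zero]
        exact hft_n.ne_zero h0
    have hunit_ab : IsUnit (coeff j (PowerSeries.map mkp a) *
        coeff k (PowerSeries.map mkp b)) := by
      rw [← hmulc, ← hfab_t, hjk]
      exact hft_n
    have hau := isUnit_of_mul_isUnit_left hunit_ab
    have hbu := isUnit_of_mul_isUnit_right hunit_ab
    have halo : ∀ i < j, coeff i a ∈ 𝔭 := by
      intro i hi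
      refine Ideal.Quotient.eq_zero_iff_mem.mp ?_
      have := hjlo i hi
      rwa [coeff_map] at this
    have hblo : ∀ i < k, coeff i b ∈ 𝔭 := by
      intro i hi
      refine Ideal.Quotient.eq_zero_iff_mem.mp ?_
      have := hklo i hi
      rwa [coeff_map] at this
    have hay : ∃ y, coeff j a * y - 1 ∈ 𝔭 := by
      obtain ⟨c, hc⟩ := isUnit_iff_exists_inv.mp hau
      obtain ⟨y, hy⟩ := Ideal.Quotient.mk_surjective c
      refine ⟨y, ?_⟩
      refine Ideal.Quotient.eq_zero_iff_mem.mp ?_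
      rw [coeff_map, ← hy] at hc
      show mkp _ = 0
      rw [map_sub, map_mul, map_one, hc, sub_self]
    have hby : ∃ y, coeff k b * y - 1 ∈ 𝔭 := by
      obtain ⟨c, hc⟩ := isUnit_iff_exists_inv.mp hbu
      obtain ⟨y, hy⟩ := Ideal.Quotient.mk_surjective c
      refine ⟨y, ?_⟩
      refine Ideal.Quotient.eq_zero_iff_mem.mp ?_
      rw [coeff_map, ← hy] at hc
      show mkp _ = 0
      rw [map_sub, map_mul, map_one, hc, sub_self]
    obtain ⟨ya, hya⟩ := hay
    obtain ⟨yb, hyb⟩ := hby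
    obtain ⟨Ua, pa, hUa, hpa1, hpahi, hpalo, hga⟩ := glue_prep 𝔭 a j halo ya hya
    obtain ⟨Ub, pb, hUb, hpb1, hpbhi, hpblo, hgb⟩ := glue_prep 𝔭 b k hblo yb hyb
    obtain ⟨hm1, hmhi, hmlo⟩ := wseries_mul (Ihat 𝔭) hpa1 hpahi hpalo hpb1 hpbhi hpblo
    rw [hjk] at hm1 hmhi hmlo
    have heqA : (Ua * Ub) * (pa * pb) = U * (P : PowerSeries (AdicCompletion 𝔭 R)) := by
      rw [show (Ua * Ub) * (pa * pb) = (Ua * pa) * (Ub * pb) by ring, ← hga, ← hgb,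
        ← map_mul, ← hab, hfact]
    have h21 : coeff n (P : PowerSeries (AdicCompletion 𝔭 R)) = 1 := by
      rw [Polynomial.coeff_coe, ← hPdeg]
      exact hPmonic.coeff_natDegree
    have h2hi : ∀ d, n < d → coeff d (P : PowerSeries (AdicCompletion 𝔭 R)) = 0 := by
      intro d hd
      rw [Polynomial.coeff_coe]
      exact Polynomial.coeff_eq_zero_of_natDegree_lt (by omega)
    obtain ⟨-, hPP⟩ := wprep_unique (Ihat 𝔭) (Ihat_haus 𝔭) hU hm1 hmhi hmlo h21 h2hi heqA
    set Pa : Polynomial (AdicCompletion 𝔭 R) := PowerSeries.trunc (j + 1) pa with hPa_def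
    set Pb : Polynomial (AdicCompletion 𝔭 R) := PowerSeries.trunc (k + 1) pb with hPb_def
    have hPa : (Pa : PowerSeries (AdicCompletion 𝔭 R)) = pa := by
      refine PowerSeries.ext fun d => ?_
      rw [Polynomial.coeff_coe, hPa_def, PowerSeries.coeff_trunc]
      split_ifs with hd
      · rfl
      · exact (hpahi d (by omega)).symm
    have hPb : (Pb : PowerSeries (AdicCompletion 𝔭 R)) = pb := by
      refine PowerSeries.ext fun d => ?_
      rw [Polynomial.coeff_coe, hPb_def, PowerSeries.coeff_trunc]
      split_ifs with hd
      · rfl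
      · exact (hpbhi d (by omega)).symm
    have hPfac : P = Pa * Pb := by
      refine (Polynomial.coe_inj.mp ?_).symm
      rw [Polynomial.coe_mul, hPa, hPb, hPP]
    rcases hPirr.isUnit_or_isUnit hPfac with hun | hun
    · have hdeg : Pa.natDegree = j := by
        refine le_antisymm ?_ ?_
        · rw [Polynomial.natDegree_le_iff_coeff_eq_zero]
          intro d hd
          rw [← Polynomial.coeff_coe, hPa]
          exact hpahi d hd
        · refine Polynomial.le_natDegree_of_ne_zero ?_
          rw [← Polynomial.coeff_coe, hPa, hpa1]
          exact one_ne_zero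
      have hj0 : j = 0 := by
        rw [← hdeg]
        exact Polynomial.natDegree_eq_zero_of_isUnit hun
      have hpa_one : pa = 1 := by
        refine PowerSeries.ext fun d => ?_
        rcases Nat.eq_zero_or_pos d with rfl | hd
        · rw [hj0] at hpa1
          rw [hpa1, coeff_one, if_pos rfl]
        · rw [hpahi d (by omega), coeff_one, if_neg (by omega)]
      have hga_unit : IsUnit (PowerSeries.map (algebraMap R (AdicCompletion 𝔭 R)) a) := by
        rw [hga, hpa_one, mul_one]
        exact hUa
      have hconst : IsUnit (algebraMap R (AdicCompletion 𝔭 R) (constantCoeff a)) := by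
        have h1 := PowerSeries.isUnit_iff_constantCoeff.mp hga_unit
        rwa [← coeff_zero_eq_constantCoeff_apply, coeff_map,
          coeff_zero_eq_constantCoeff_apply] at h1
      refine hdiv (constantCoeff a) ⟨constantCoeff b, by rw [hab, map_mul]⟩ ?_ hconst
      intro hu
      exact ha (PowerSeries.isUnit_iff_constantCoeff.mpr hu)
    · have hdeg : Pb.natDegree = k := by
        refine le_antisymm ?_ ?_
        · rw [Polynomial.natDegree_le_iff_coeff_eq_zero]
          intro d hd
          rw [← Polynomial.coeff_coe, hPb]
          exact hpbhi d hd
        · refine Polynomial.le_natDegree_of_ne_zero ?_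
          rw [← Polynomial.coeff_coe, hPb, hpb1]
          exact one_ne_zero
      have hk0 : k = 0 := by
        rw [← hdeg]
        exact Polynomial.natDegree_eq_zero_of_isUnit hun
      have hpb_one : pb = 1 := by
        refine PowerSeries.ext fun d => ?_
        rcases Nat.eq_zero_or_pos d with rfl | hd
        · rw [hk0] at hpb1
          rw [hpb1, coeff_one, if_pos rfl]
        · rw [hpbhi d (by omega), coeff_one, if_neg (by omega)]
      have hgb_unit : IsUnit (PowerSeries.map (algebraMap R (AdicCompletion 𝔭 R)) b) := by
        rw [hgb, hpb_one, mul_one]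
        exact hUb
      have hconst : IsUnit (algebraMap R (AdicCompletion 𝔭 R) (constantCoeff b)) := by
        have h1 := PowerSeries.isUnit_iff_constantCoeff.mp hgb_unit
        rwa [← coeff_zero_eq_constantCoeff_apply, coeff_map,
          coeff_zero_eq_constantCoeff_apply] at h1
      refine hdiv (constantCoeff b) ⟨constantCoeff a, by rw [hab, map_mul, mul_comm]⟩ ?_ hconst
      intro hu
      exact hb (PowerSeries.isUnit_iff_constantCoeff.mpr hu)
end
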